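/- arXiv:2504.19259 — 6 statements merged into one kernel-verified Lean document; each statement's English description precedes it below -/
import Mathlib

section
/- Let q, p₀ ∈ S_n with p₀ ≠ q, and let θ : [0, ∞) → ℝⁿ be differentiable with θ(0) = θ_{p₀} and θ'(t) = −∇L_q(θ(t)) for all t ≥ 0, where L_q is the loss in θ coordinates. Then there exist constants 0 < m ≤ L < 1 and c > 0 such that c·e^{−2t} ≤ c·e^{−2Lt} ≤ L_q(θ(t)) ≤ c·e^{−2mt} for all t ≥ 0; i.e., L_q(θ(t)) converges to zero exponentially with rate lower than 2. -/
open Filter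

noncomputable section

abbrev E (n : ℕ) := EuclideanSpace ℝ (Fin n)

/-- The open probability simplex `S_n` inside `ℝ^{n+1}`. -/
def simplex (n : ℕ) : Set (Fin (n+1) → ℝ) :=
  {p | (∀ i, 0 < p i) ∧ ∑ i, p i = 1}

/-- The mixture (`η`) coordinate domain `Δ_n`. -/
def Δset (n : ℕ) : Set (E n) := {η | (∀ i, 0 < η i) ∧ ∑ i, η i < 1}

/-- The distribution in `S_n` corresponding to `η` coordinates. -/
def mixDist {n : ℕ} (η : E n) : Fin (n+1) → ℝ :=
  Fin.snoc (fun i => η i) (1 - ∑ i, η i)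

/-- The distribution in `S_n` corresponding to `θ` coordinates. -/
def expDist {n : ℕ} (θ : E n) : Fin (n+1) → ℝ :=
  Fin.snoc (fun i => Real.exp (θ i) / (1 + ∑ j, Real.exp (θ j)))
    (1 / (1 + ∑ j, Real.exp (θ j)))

/-- The `η` coordinates of a distribution `q ∈ S_n`. -/
def etaCoord {n : ℕ} (q : Fin (n+1) → ℝ) : E n := WithLp.toLp 2 (fun i : Fin n => q i.castSucc)

/-- The `θ` coordinates of a distribution `q ∈ S_n`. -/
def thetaCoord {n : ℕ} (q : Fin (n+1) → ℝ) : E n :=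
  WithLp.toLp 2 (fun i : Fin n => Real.log (q i.castSucc / q (Fin.last n)))

/-- Kullback–Leibler divergence `D(q‖p)`. -/
def KL {n : ℕ} (q p : Fin (n+1) → ℝ) : ℝ := ∑ i, q i * Real.log (q i / p i)

/-- Log-partition function `ψ(θ) = log(1 + Σ e^{θ_i})`. -/
def psi {n : ℕ} (θ : E n) : ℝ := Real.log (1 + ∑ i, Real.exp (θ i))

/-- Negative entropy `φ(η)`. -/
def phi {n : ℕ} (η : E n) : ℝ :=
  (∑ i, η i * Real.log (η i)) + (1 - ∑ i, η i) * Real.log (1 - ∑ i, η i)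

/-- The loss `L_q` in `η` coordinates: `η ↦ D(q ‖ p(η))`. -/
def Leta {n : ℕ} (q : Fin (n+1) → ℝ) (η : E n) : ℝ := KL q (mixDist η)

/-- The loss `L_q` in `θ` coordinates: `θ ↦ D(q ‖ p(θ))`. -/
def Ltheta {n : ℕ} (q : Fin (n+1) → ℝ) (θ : E n) : ℝ := KL q (expDist θ)

/-- The Hessian of `f : ℝⁿ → ℝ` at `x`, as the `n × n` matrix of second partial
derivatives. -/
def hess {n : ℕ} (f : E n → ℝ) (x : E n) : Matrix (Fin n) (Fin n) ℝ :=
  Matrix.of fun i j =>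
    fderiv ℝ (fun y => fderiv ℝ f y (EuclideanSpace.single j 1)) x (EuclideanSpace.single i 1)

/-- The set of (real) eigenvalues of a matrix. -/
def lamSet {n : ℕ} (A : Matrix (Fin n) (Fin n) ℝ) : Set ℝ :=
  {μ | ∃ v : Fin n → ℝ, v ≠ 0 ∧ A.mulVec v = μ • v}

/-- Largest eigenvalue `λ_max`. -/
def lamMax {n : ℕ} (A : Matrix (Fin n) (Fin n) ℝ) : ℝ := sSup (lamSet A)

/-- Smallest eigenvalue `λ_min`. -/
def lamMin {n : ℕ} (A : Matrix (Fin n) (Fin n) ℝ) : ℝ := sInf (lamSet A)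

/-- Condition number `cond(A) = λ_max(A)/λ_min(A)`. -/
def condNum {n : ℕ} (A : Matrix (Fin n) (Fin n) ℝ) : ℝ := lamMax A / lamMin A

/-- Operator 2-norm of a matrix (induced by the Euclidean norm). -/
def opNorm {n : ℕ} (A : Matrix (Fin n) (Fin n) ℝ) : ℝ :=
  ‖Matrix.toEuclideanCLM (𝕜 := ℝ) A‖



section AuxLemmas
open Real Set

open Real Set

private lemma hasDerivAt_g1 {y : ℝ} (hy : 0 < y) :
    HasDerivAt (fun y : ℝ => y - 1 - Real.log y - (1-y)^2/2) (-(y-1)^2/y) y := by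
  have h1 : HasDerivAt (fun y : ℝ => y - 1 - Real.log y) (1 - y⁻¹) y :=
    ((hasDerivAt_id y).sub_const 1).sub (Real.hasDerivAt_log (ne_of_gt hy))
  have h2 : HasDerivAt (fun y : ℝ => (1-y)^2/2) ((2*(1-y)^1*(-1))/2) y := by
    exact (((hasDerivAt_id y).const_sub 1).pow 2).div_const 2
  have := h1.sub h2
  refine this.congr_deriv ?_
  field_simp
  ring

lemma aux_log_le_one {x : ℝ} (hx : 0 < x) (hx1 : x ≤ 1) :
    (1-x)^2/2 ≤ x - 1 - Real.log x := by
  set g : ℝ → ℝ := fun y => y - 1 - Real.log y - (1-y)^2/2 with hg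
  have hanti : AntitoneOn g (Ioc (0:ℝ) 1) := by
    apply antitoneOn_of_deriv_nonpos (convex_Ioc 0 1)
    · intro y hy
      exact (hasDerivAt_g1 hy.1).continuousAt.continuousWithinAt
    · intro y hy
      rw [interior_Ioc] at hy
      exact (hasDerivAt_g1 hy.1).differentiableAt.differentiableWithinAt
    · intro y hy
      rw [interior_Ioc] at hy
      rw [(hasDerivAt_g1 hy.1).deriv]
      apply div_nonpos_of_nonpos_of_nonneg (neg_nonpos.mpr (sq_nonneg _)) hy.1.le
  have h0 : g 1 ≤ g x := hanti ⟨hx, hx1⟩ ⟨one_pos, le_refl 1⟩ hx1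
  have : g 1 = 0 := by simp [hg]
  rw [this] at h0
  simp only [hg] at h0
  linarith

private lemma hasDerivAt_g2 {y : ℝ} (hy : 0 < y) :
    HasDerivAt (fun y : ℝ => y - 1 - Real.log y - (y/2 - 1 + 1/(2*y)))
      ((y-1)^2/(2*y^2)) y := by
  have h1 : HasDerivAt (fun y : ℝ => y - 1 - Real.log y) (1 - y⁻¹) y :=
    ((hasDerivAt_id y).sub_const 1).sub (Real.hasDerivAt_log (ne_of_gt hy))
  have h2 : HasDerivAt (fun y : ℝ => y/2 - 1 + 1/(2*y)) (1/2 + (-(2)/(2*y)^2)) y := by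
    have hb : HasDerivAt (fun y : ℝ => 1/(2*y)) (-(2)/(2*y)^2) y := by
      have h2y : HasDerivAt (fun y : ℝ => 2*y) 2 y := by
        simpa using (hasDerivAt_id y).const_mul 2
      have := h2y.inv (by positivity)
      have hfun : (fun y : ℝ => 1/(2*y)) = (fun y => 2*y)⁻¹ := by
        funext z
        simp [one_div]
      rw [hfun]
      exact this
    exact (((hasDerivAt_id y).div_const 2).sub_const 1).add hb
  have := h1.sub h2
  refine this.congr_deriv ?_
  field_simp
  ring

lemma aux_log_ge_one {x : ℝ} (hx1 : 1 ≤ x) :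
    (x-1)^2/(2*x) ≤ x - 1 - Real.log x := by
  set g : ℝ → ℝ := fun y => y - 1 - Real.log y - (y/2 - 1 + 1/(2*y)) with hg
  have hmono : MonotoneOn g (Ici (1:ℝ)) := by
    apply monotoneOn_of_deriv_nonneg (convex_Ici 1)
    · intro y hy
      have : (0:ℝ) < y := lt_of_lt_of_le one_pos hy
      exact (hasDerivAt_g2 this).continuousAt.continuousWithinAt
    · intro y hy
      rw [interior_Ici] at hy
      exact (hasDerivAt_g2 (lt_trans one_pos hy)).differentiableAt.differentiableWithinAt
    · intro y hy
      rw [interior_Ici] at hy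
      rw [(hasDerivAt_g2 (lt_trans one_pos hy)).deriv]
      positivity
  have h0 : g 1 ≤ g x := hmono (mem_Ici.mpr le_rfl) (mem_Ici.mpr hx1) hx1
  have h1 : g 1 = 0 := by norm_num [hg]
  have hx0 : (0:ℝ) < x := lt_of_lt_of_le one_pos hx1
  have key : (x/2 - 1 + 1/(2*x)) = (x-1)^2/(2*x) := by
    field_simp
    ring
  rw [h1] at h0
  simp only [hg] at h0
  linarith [key ▸ h0]

lemma kl_term {p q : ℝ} (hp : 0 < p) (hq : 0 < q) :
    (q-p)^2/(2*max p q) ≤ q * Real.log (q/p) + p - q := by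
  set x := p/q with hxdef
  have hx : 0 < x := div_pos hp hq
  have hpq : p = q * x := by rw [hxdef]; field_simp
  have hlog : Real.log (q/p) = -Real.log x := by
    rw [hxdef, ← Real.log_inv]
    congr 1
    field_simp
  have hsum : q * Real.log (q/p) + p - q = q * (x - 1 - Real.log x) := by
    rw [hlog, hpq]; ring
  have hquad : (q-p)^2 = q^2 * (x-1)^2 := by rw [hpq]; ring
  rw [hsum, hquad]
  rcases le_total p q with h | h
  · have hmax : max p q = q := max_eq_right h
    have hx1 : x ≤ 1 := by rw [hxdef]; exact div_le_one_of_le₀ h hq.le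
    have := aux_log_le_one hx hx1
    have h2 : q^2*(x-1)^2/(2*q) = q * ((1-x)^2/2) := by
      field_simp; ring
    rw [hmax, h2]
    exact mul_le_mul_of_nonneg_left this hq.le
  · have hmax : max p q = p := max_eq_left h
    have hx1 : 1 ≤ x := by rw [hxdef]; exact (one_le_div hq).mpr h
    have := aux_log_ge_one hx1
    have h2 : q^2*(x-1)^2/(2*p) = q * ((x-1)^2/(2*x)) := by
      rw [hpq]; field_simp
    rw [hmax, h2]
    exact mul_le_mul_of_nonneg_left this hq.le

end AuxLemmas
section KLsec
open Real
variable {n : ℕ} {q p : Fin (n+1) → ℝ}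

lemma simplex_le_one (hp : p ∈ simplex n) (i : Fin (n+1)) : p i ≤ 1 := by
  obtain ⟨hpos, hsum⟩ := hp
  calc p i ≤ ∑ j, p j := Finset.single_le_sum (fun j _ => (hpos j).le) (Finset.mem_univ i)
    _ = 1 := hsum

lemma simplex_add_le_one (hp : p ∈ simplex n) {i j : Fin (n+1)} (hij : i ≠ j) :
    p i + p j ≤ 1 := by
  obtain ⟨hpos, hsum⟩ := hp
  calc p i + p j = ∑ k ∈ ({i, j} : Finset (Fin (n+1))), p k := (Finset.sum_pair hij).symm
    _ ≤ ∑ k, p k := Finset.sum_le_sum_of_subset_of_nonneg (Finset.subset_univ _)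
        (fun k _ _ => (hpos k).le)
    _ = 1 := hsum

lemma KL_eq_sum (hq : q ∈ simplex n) (hp : p ∈ simplex n) :
    KL q p = ∑ i, (q i * Real.log (q i / p i) + p i - q i) := by
  unfold KL
  rw [Finset.sum_sub_distrib, Finset.sum_add_distrib, hq.2, hp.2]
  ring

lemma kl_term_nonneg (hq : q ∈ simplex n) (hp : p ∈ simplex n) (i : Fin (n+1)) :
    (q i - p i)^2/(2 * max (p i) (q i)) ≤ q i * Real.log (q i / p i) + p i - q i :=
  kl_term (hp.1 i) (hq.1 i)

lemma KL_ge (hq : q ∈ simplex n) (hp : p ∈ simplex n) :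
    ∑ i, (q i - p i)^2/(2 * max (p i) (q i)) ≤ KL q p := by
  rw [KL_eq_sum hq hp]
  exact Finset.sum_le_sum fun i _ => kl_term_nonneg hq hp i

lemma KL_nonneg (hq : q ∈ simplex n) (hp : p ∈ simplex n) : 0 ≤ KL q p := by
  refine le_trans ?_ (KL_ge hq hp)
  apply Finset.sum_nonneg
  intro i _
  have := hp.1 i; have := hq.1 i
  positivity

lemma KL_pos (hq : q ∈ simplex n) (hp : p ∈ simplex n) (hne : p ≠ q) : 0 < KL q p := by
  refine lt_of_lt_of_le ?_ (KL_ge hq hp)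
  apply Finset.sum_pos'
  · intro i _
    have := hp.1 i; have := hq.1 i
    positivity
  · have : ∃ i, p i ≠ q i := by
      by_contra h
      push_neg at h
      exact hne (funext h)
    obtain ⟨i, hi⟩ := this
    refine ⟨i, Finset.mem_univ i, ?_⟩
    have h1 : (q i - p i)^2 > 0 := by
      have : q i - p i ≠ 0 := sub_ne_zero.mpr (Ne.symm hi)
      positivity
    have h2 : 0 < max (p i) (q i) := lt_max_of_lt_left (hp.1 i)
    positivity

lemma KL_le_chisq (hq : q ∈ simplex n) (hp : p ∈ simplex n) :
    KL q p ≤ ∑ i, (q i - p i)^2 / p i := by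
  rw [KL_eq_sum hq hp]
  apply Finset.sum_le_sum
  intro i _
  have hpi := hp.1 i
  have hqi := hq.1 i
  have hlog : Real.log (q i / p i) ≤ q i / p i - 1 :=
    Real.log_le_sub_one_of_pos (div_pos hqi hpi)
  have h1 : q i * Real.log (q i / p i) ≤ q i * (q i / p i - 1) :=
    mul_le_mul_of_nonneg_left hlog hqi.le
  have h2 : q i * (q i / p i - 1) + p i - q i = (q i - p i)^2 / p i := by
    field_simp
    ring
  linarith

lemma KL_coord_lb (hq : q ∈ simplex n) (hp : p ∈ simplex n) (i : Fin (n+1)) :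
    q i * Real.log (q i / p i) - 1 ≤ KL q p := by
  rw [KL_eq_sum hq hp]
  have h1 : q i * Real.log (q i / p i) + p i - q i ≤
      ∑ j, (q j * Real.log (q j / p j) + p j - q j) := by
    apply Finset.single_le_sum (f := fun j => q j * Real.log (q j / p j) + p j - q j)
      (fun j _ => le_trans (by have := hp.1 j; have := hq.1 j; positivity)
        (kl_term_nonneg hq hp j)) (Finset.mem_univ i)
  have h2 : q i - p i ≤ 1 := by
    have := hp.1 i
    have := simplex_le_one hq i
    linarith
  linarith

lemma expDist_mem {θ : E n} : expDist θ ∈ simplex n := by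
  have hZ : (0:ℝ) < 1 + ∑ j, Real.exp (θ j) := by positivity
  constructor
  · intro i
    refine Fin.lastCases ?_ ?_ i
    · simp only [expDist, Fin.snoc_last]
      positivity
    · intro i
      simp only [expDist, Fin.snoc_castSucc]
      positivity
  · rw [Fin.sum_univ_castSucc]
    simp only [expDist, Fin.snoc_castSucc, Fin.snoc_last]
    rw [← Finset.sum_div]
    field_simp
    ring
end KLsec

section Grad
open Real
variable {n : ℕ} {q : Fin (n+1) → ℝ}

lemma Ltheta_eq (hq : q ∈ simplex n) (θ : E n) :
    Ltheta q θ = (∑ i, q i * Real.log (q i)) - (∑ i : Fin n, q i.castSucc * θ i)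
      + psi θ := by
  have hZ : (0:ℝ) < 1 + ∑ j, Real.exp (θ j) := by positivity
  set Z := 1 + ∑ j, Real.exp (θ j) with hZdef
  have hlog : ∀ i, q i * Real.log (q i / expDist θ i)
      = q i * Real.log (q i) - q i * Real.log (expDist θ i) := by
    intro i
    rw [Real.log_div (ne_of_gt (hq.1 i)) (ne_of_gt (expDist_mem.1 i))]
    ring
  unfold Ltheta KL
  simp only [hlog]
  rw [Finset.sum_sub_distrib]
  have hlogp : ∑ i, q i * Real.log (expDist θ i)
      = (∑ i : Fin n, q i.castSucc * θ i) - Real.log Z := by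
    rw [Fin.sum_univ_castSucc]
    simp only [expDist, Fin.snoc_castSucc, Fin.snoc_last]
    have h1 : ∀ i : Fin n, Real.log (Real.exp (θ i) / Z) = θ i - Real.log Z := by
      intro i
      rw [Real.log_div (Real.exp_ne_zero _) (ne_of_gt hZ), Real.log_exp]
    have h2 : Real.log (1 / Z) = -Real.log Z := by
      rw [one_div, Real.log_inv]
    simp only [← hZdef, h1, h2]
    have hsq : ∑ i : Fin n, q i.castSucc = 1 - q (Fin.last n) := by
      have := hq.2
      rw [Fin.sum_univ_castSucc] at this
      linarith
    have hexpand : (∑ i : Fin n, q i.castSucc * (θ i - Real.log Z)) =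
        (∑ i : Fin n, q i.castSucc * θ i) - (∑ i : Fin n, q i.castSucc) * Real.log Z := by
      rw [Finset.sum_mul, ← Finset.sum_sub_distrib]
      congr 1; ext i; ring
    rw [hexpand, hsq]
    ring
  rw [hlogp]
  unfold psi
  ring

lemma hasGradientAt_Ltheta (hq : q ∈ simplex n) (θ : E n) :
    HasGradientAt (Ltheta q)
      (WithLp.toLp 2 (fun i => expDist θ i.castSucc - q i.castSucc : Fin n → ℝ) : E n) θ := by
  have hZ : (0:ℝ) < 1 + ∑ j, Real.exp (θ j) := by positivity
  -- derivative of x ↦ ∑ exp (x j)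
  have hS : HasFDerivAt (fun x : E n => ∑ j, Real.exp (x j))
      (∑ j, Real.exp (θ j) • (EuclideanSpace.proj j : E n →L[ℝ] ℝ)) θ := by
    apply HasFDerivAt.fun_sum
    intro j _
    have hproj : HasFDerivAt (fun y : E n => y j)
        (EuclideanSpace.proj j : E n →L[ℝ] ℝ) θ := by
      exact (EuclideanSpace.proj (𝕜 := ℝ) j).hasFDerivAt
    simpa using hproj.exp
  have hpsi : HasFDerivAt psi
      ((1 + ∑ j, Real.exp (θ j))⁻¹ •
        (∑ j, Real.exp (θ j) • (EuclideanSpace.proj j : E n →L[ℝ] ℝ))) θ := by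
    have hAdd : HasFDerivAt (fun x : E n => 1 + ∑ j, Real.exp (x j))
        (∑ j, Real.exp (θ j) • (EuclideanSpace.proj j : E n →L[ℝ] ℝ)) θ := hS.const_add 1
    have := hAdd.log (ne_of_gt hZ)
    exact this
  have hlin : HasFDerivAt (fun x : E n => ∑ i : Fin n, q i.castSucc * x i)
      (∑ i : Fin n, q i.castSucc • (EuclideanSpace.proj i : E n →L[ℝ] ℝ)) θ := by
    apply HasFDerivAt.fun_sum
    intro i _
    have hproj : HasFDerivAt (fun y : E n => y i)
        (EuclideanSpace.proj i : E n →L[ℝ] ℝ) θ := by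
      exact (EuclideanSpace.proj (𝕜 := ℝ) i).hasFDerivAt
    exact hproj.const_mul _
  have hF : HasFDerivAt
      (fun x : E n => (∑ i, q i * Real.log (q i)) - (∑ i : Fin n, q i.castSucc * x i) + psi x)
      ((0 : E n →L[ℝ] ℝ) - (∑ i : Fin n, q i.castSucc • (EuclideanSpace.proj i : E n →L[ℝ] ℝ))
        + (1 + ∑ j, Real.exp (θ j))⁻¹ •
          (∑ j, Real.exp (θ j) • (EuclideanSpace.proj j : E n →L[ℝ] ℝ))) θ :=
    ((hasFDerivAt_const _ θ).sub hlin).add hpsi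
  have hfun : Ltheta q = fun x : E n =>
      (∑ i, q i * Real.log (q i)) - (∑ i : Fin n, q i.castSucc * x i) + psi x :=
    funext (Ltheta_eq hq)
  rw [hasGradientAt_iff_hasFDerivAt, hfun]
  refine hF.congr_fderiv (Eq.symm ?_)
  apply ContinuousLinearMap.ext
  intro v
  rw [InnerProductSpace.toDual_apply_apply]
  rw [PiLp.inner_apply]
  simp only [ContinuousLinearMap.add_apply, ContinuousLinearMap.sub_apply,
    ContinuousLinearMap.zero_apply, ContinuousLinearMap.smul_apply,
    ContinuousLinearMap.sum_apply, PiLp.proj_apply, smul_eq_mul,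
    RCLike.inner_apply, starRingEnd_apply, star_trivial]
  rw [zero_sub, neg_add_eq_sub, Finset.mul_sum, ← Finset.sum_sub_distrib]
  apply Finset.sum_congr rfl
  intro i _
  simp only [expDist, Fin.snoc_castSucc, PiLp.proj_apply]
  field_simp
end Grad

section MoreAux
open Real Set
variable {n : ℕ}

lemma expDist_thetaCoord {p : Fin (n+1) → ℝ} (hp : p ∈ simplex n) :
    expDist (thetaCoord p) = p := by
  have hlast : 0 < p (Fin.last n) := hp.1 _
  have hexp : ∀ i : Fin n, Real.exp (thetaCoord p i) = p i.castSucc / p (Fin.last n) := by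
    intro i
    rw [thetaCoord, Real.exp_log (div_pos (hp.1 _) hlast)]
  have hsumc : ∑ i : Fin n, p i.castSucc = 1 - p (Fin.last n) := by
    have := hp.2
    rw [Fin.sum_univ_castSucc] at this
    linarith
  have hZ : 1 + ∑ j : Fin n, Real.exp (thetaCoord p j) = 1 / p (Fin.last n) := by
    simp only [hexp]
    rw [← Finset.sum_div, hsumc]
    field_simp
    ring
  funext i
  refine Fin.lastCases ?_ ?_ i
  · simp only [expDist, Fin.snoc_last, hZ]
    field_simp
  · intro i
    simp only [expDist, Fin.snoc_castSucc, hexp]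
    rw [← Finset.sum_div, hsumc]
    field_simp
    ring

lemma enorm_sq (v : E n) : ‖v‖^2 = ∑ i, (v i)^2 := by
  rw [EuclideanSpace.norm_eq, Real.sq_sqrt (by positivity)]
  simp [Real.norm_eq_abs, sq_abs]

lemma monoAux {f g : ℝ → ℝ} (hf : ∀ t ∈ Ici (0:ℝ), HasDerivAt f (g t) t)
    (h0 : ∀ t ∈ Ici (0:ℝ), 0 ≤ g t) : MonotoneOn f (Ici 0) := by
  apply monotoneOn_of_deriv_nonneg (convex_Ici 0)
  · intro t ht
    exact (hf t ht).continuousAt.continuousWithinAt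
  · intro t ht
    rw [interior_Ici] at ht
    exact (hf t (Set.mem_Ici.mpr (le_of_lt ht))).differentiableAt.differentiableWithinAt
  · intro t ht
    rw [interior_Ici] at ht
    rw [(hf t (Set.mem_Ici.mpr ht.le)).deriv]
    exact h0 t (Set.mem_Ici.mpr ht.le)

lemma antiAux {f g : ℝ → ℝ} (hf : ∀ t ∈ Ici (0:ℝ), HasDerivAt f (g t) t)
    (h0 : ∀ t ∈ Ici (0:ℝ), g t ≤ 0) : AntitoneOn f (Ici 0) := by
  apply antitoneOn_of_deriv_nonpos (convex_Ici 0)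
  · intro t ht
    exact (hf t ht).continuousAt.continuousWithinAt
  · intro t ht
    rw [interior_Ici] at ht
    exact (hf t (Set.mem_Ici.mpr (le_of_lt ht))).differentiableAt.differentiableWithinAt
  · intro t ht
    rw [interior_Ici] at ht
    rw [(hf t (Set.mem_Ici.mpr ht.le)).deriv]
    exact h0 t (Set.mem_Ici.mpr ht.le)

lemma expAux (k t : ℝ) : HasDerivAt (fun t : ℝ => Real.exp (k*t)) (k * Real.exp (k*t)) t := by
  have h : HasDerivAt (fun t : ℝ => k*t) k t := by simpa using (hasDerivAt_id t).const_mul k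
  simpa [mul_comm] using h.exp
end MoreAux


set_option maxHeartbeats 1000000 in
/-- Convergence of the `θ`-gradient flow: exponential rate lower than 2. -/
theorem stmt_6 {n : ℕ} (q p₀ : Fin (n+1) → ℝ)
    (hq : q ∈ simplex n) (hp₀ : p₀ ∈ simplex n) (hne : p₀ ≠ q)
    (θ : ℝ → E n) (hθ0 : θ 0 = thetaCoord p₀)
    (hode : ∀ t ≥ (0 : ℝ), HasDerivAt θ (-(gradient (Ltheta q) (θ t))) t) :
    ∃ m L c : ℝ, 0 < m ∧ m ≤ L ∧ L < 1 ∧ 0 < c ∧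
      ∀ t ≥ (0 : ℝ),
        c * Real.exp (-2 * t) ≤ c * Real.exp (-2 * L * t) ∧
        c * Real.exp (-2 * L * t) ≤ Ltheta q (θ t) ∧
        Ltheta q (θ t) ≤ c * Real.exp (-2 * m * t) := by
  classical
  set G : E n → E n :=
    fun x => (WithLp.toLp 2 (fun i => expDist x i.castSucc - q i.castSucc : Fin n → ℝ) : E n) with hGdef
  set f : ℝ → ℝ := fun t => Ltheta q (θ t) with hfdef
  have hGgrad : ∀ x : E n, HasGradientAt (Ltheta q) (G x) x := fun x => hasGradientAt_Ltheta hq x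
  have hθ' : ∀ t ∈ Set.Ici (0:ℝ), HasDerivAt θ (-(G (θ t))) t := by
    intro t ht
    have h := hode t ht
    rwa [(hGgrad (θ t)).gradient] at h
  have hf' : ∀ t ∈ Set.Ici (0:ℝ), HasDerivAt f (-‖G (θ t)‖^2) t := by
    intro t ht
    have hcomp := (hGgrad (θ t)).hasFDerivAt.comp_hasDerivAt t (hθ' t ht)
    have hval : (InnerProductSpace.toDual ℝ (E n) (G (θ t))) (-(G (θ t)))
        = -‖G (θ t)‖^2 := by
      rw [InnerProductSpace.toDual_apply_apply, inner_neg_right, real_inner_self_eq_norm_sq]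
    rw [hval] at hcomp
    simpa [hfdef, Function.comp_def] using hcomp
  have hfnn : ∀ t : ℝ, 0 ≤ f t := fun t => KL_nonneg hq expDist_mem
  have hfle : ∀ t ≥ (0:ℝ), f t ≤ f 0 := by
    have hanti : AntitoneOn f (Set.Ici 0) :=
      antiAux hf' (fun t _ => neg_nonpos.mpr (sq_nonneg _))
    intro t ht
    exact hanti Set.self_mem_Ici ht ht
  have hc : 0 < f 0 := by
    have : f 0 = KL q p₀ := by
      rw [hfdef]
      simp only [hθ0]
      rw [Ltheta, expDist_thetaCoord hp₀]
    rw [this]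
    exact KL_pos hq hp₀ hne
  -- the uniform lower bound δ on the coordinates of the trajectory
  set δ : ℝ := Finset.univ.inf' Finset.univ_nonempty
    (fun i => q i * Real.exp (-(f 0 + 1) / q i)) with hδdef
  have hδpos : 0 < δ := by
    rw [hδdef, Finset.lt_inf'_iff]
    intro i _
    have := hq.1 i
    positivity
  have hδ1 : δ < 1 := by
    have h1 : δ ≤ q (Fin.last n) * Real.exp (-(f 0 + 1) / q (Fin.last n)) :=
      Finset.inf'_le _ (Finset.mem_univ _)
    have h2 : Real.exp (-(f 0 + 1) / q (Fin.last n)) < 1 := by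
      rw [Real.exp_lt_one_iff]
      have := hq.1 (Fin.last n)
      have : 0 < (f 0 + 1) / q (Fin.last n) := by positivity
      linarith [neg_div (q (Fin.last n)) (f 0 + 1)]
    have h3 := hq.1 (Fin.last n)
    have h4 := simplex_le_one hq (Fin.last n)
    nlinarith [Real.exp_pos (-(f 0 + 1) / q (Fin.last n))]
  have hPδ : ∀ t ≥ (0:ℝ), ∀ i, δ ≤ expDist (θ t) i := by
    intro t ht i
    have hPmem : expDist (θ t) ∈ simplex n := expDist_mem
    have h1 : q i * Real.log (q i / expDist (θ t) i) - 1 ≤ f t := KL_coord_lb hq hPmem i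
    have h2 : q i * Real.log (q i / expDist (θ t) i) ≤ f 0 + 1 := by
      linarith [hfle t ht]
    have hqi := hq.1 i
    have hPi := hPmem.1 i
    have h3 : Real.log (q i / expDist (θ t) i) ≤ (f 0 + 1) / q i := by
      rw [le_div_iff₀ hqi]
      linarith [h2, mul_comm (q i) (Real.log (q i / expDist (θ t) i))]
    have h4 : q i / expDist (θ t) i ≤ Real.exp ((f 0 + 1) / q i) := by
      rw [← Real.exp_log (div_pos hqi hPi)]
      exact Real.exp_le_exp.mpr h3
    have h5 : q i / Real.exp ((f 0 + 1) / q i) ≤ expDist (θ t) i := by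
      rw [div_le_iff₀ (Real.exp_pos _)]
      rw [div_le_iff₀ hPi] at h4
      linarith [mul_comm (expDist (θ t) i) (Real.exp ((f 0 + 1) / q i))]
    have h6 : q i * Real.exp (-(f 0 + 1) / q i) = q i / Real.exp ((f 0 + 1) / q i) := by
      rw [neg_div, Real.exp_neg, ← div_eq_mul_inv]
    calc δ ≤ q i * Real.exp (-(f 0 + 1) / q i) := Finset.inf'_le _ (Finset.mem_univ _)
      _ ≤ expDist (θ t) i := by rw [h6]; exact h5
  -- qmin
  set qmin : ℝ := Finset.univ.inf' Finset.univ_nonempty q with hqmindef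
  have hqminpos : 0 < qmin := by
    rw [hqmindef, Finset.lt_inf'_iff]
    exact fun i _ => hq.1 i
  have hqminle : ∀ i, qmin ≤ q i := fun i => Finset.inf'_le _ (Finset.mem_univ _)
  set lam : ℝ := 1 - min δ qmin with hlamdef
  have hlam1 : lam < 1 := by
    have : 0 < min δ qmin := lt_min hδpos hqminpos
    rw [hlamdef]; linarith
  have hlam0 : 0 < lam := by
    have : min δ qmin ≤ δ := min_le_left _ _
    rw [hlamdef]; linarith
  have hmaxle : ∀ t ≥ (0:ℝ), ∀ i : Fin n,
      max (expDist (θ t) i.castSucc) (q i.castSucc) ≤ lam := by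
    intro t ht i
    have hne' : i.castSucc ≠ Fin.last n := (Fin.castSucc_lt_last i).ne
    apply max_le
    · have h1 := simplex_add_le_one (expDist_mem (θ := θ t)) hne'
      have h2 := hPδ t ht (Fin.last n)
      have h3 : min δ qmin ≤ δ := min_le_left _ _
      rw [hlamdef]; linarith
    · have h1 := simplex_add_le_one hq hne'
      have h2 := hqminle (Fin.last n)
      have h3 : min δ qmin ≤ qmin := min_le_right _ _
      rw [hlamdef]; linarith
  -- lower bound on f via lam
  have hlow : ∀ t ≥ (0:ℝ), ‖G (θ t)‖^2 ≤ 2 * lam * f t := by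
    intro t ht
    have hPmem : expDist (θ t) ∈ simplex n := expDist_mem
    have h1 := KL_ge hq hPmem
    rw [Fin.sum_univ_castSucc] at h1
    have hlastnn : 0 ≤ (q (Fin.last n) - expDist (θ t) (Fin.last n))^2 /
        (2 * max (expDist (θ t) (Fin.last n)) (q (Fin.last n))) := by
      have := hPmem.1 (Fin.last n)
      have := hq.1 (Fin.last n)
      positivity
    have h2 : ∑ i : Fin n, (G (θ t) i)^2 / (2 * lam) ≤
        ∑ i : Fin n, (q i.castSucc - expDist (θ t) i.castSucc)^2 /
          (2 * max (expDist (θ t) i.castSucc) (q i.castSucc)) := by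
      apply Finset.sum_le_sum
      intro i _
      have hGi : (G (θ t) i)^2 = (q i.castSucc - expDist (θ t) i.castSucc)^2 := by
        rw [hGdef]
        simp only
        ring
      rw [hGi]
      have hmax : max (expDist (θ t) i.castSucc) (q i.castSucc) ≤ lam := hmaxle t ht i
      have hmaxpos : 0 < max (expDist (θ t) i.castSucc) (q i.castSucc) :=
        lt_max_of_lt_left (hPmem.1 _)
      gcongr
      all_goals first
        | exact sq_nonneg _
        | exact hmaxpos
        | exact hmax
        | positivity
    have h3 : ‖G (θ t)‖^2 / (2*lam) ≤ f t := by
      rw [enorm_sq, Finset.sum_div]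
      calc (∑ i : Fin n, (G (θ t) i)^2 / (2*lam)) ≤ _ := h2
        _ ≤ f t := by
          show _ ≤ KL q (expDist (θ t))
          linarith
    rw [div_le_iff₀ (by positivity : (0:ℝ) < 2*lam)] at h3
    linarith [h3]
  -- upper bound on f via δ
  have hup : ∀ t ≥ (0:ℝ), f t ≤ ((n+1)/δ) * ‖G (θ t)‖^2 := by
    intro t ht
    have hPmem : expDist (θ t) ∈ simplex n := expDist_mem
    have h1 := KL_le_chisq hq hPmem
    have h2 : ∑ i, (q i - expDist (θ t) i)^2 / expDist (θ t) i ≤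
        ∑ i, (q i - expDist (θ t) i)^2 / δ := by
      apply Finset.sum_le_sum
      intro i _
      gcongr
      all_goals first
        | exact sq_nonneg _
        | exact hδpos
        | exact hPδ t ht i
        | positivity
    have hdlast : q (Fin.last n) - expDist (θ t) (Fin.last n) = ∑ i : Fin n, G (θ t) i := by
      have hq2 := hq.2
      have hp2 := hPmem.2
      rw [Fin.sum_univ_castSucc] at hq2 hp2
      rw [hGdef]
      simp only
      rw [Finset.sum_sub_distrib]
      linarith
    have h3 : ∑ i, (q i - expDist (θ t) i)^2 ≤ (n+1) * ‖G (θ t)‖^2 := by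
      rw [Fin.sum_univ_castSucc, hdlast, enorm_sq]
      have h4 : (∑ i : Fin n, G (θ t) i)^2 ≤ n * ∑ i : Fin n, (G (θ t) i)^2 := by
        have := sq_sum_le_card_mul_sum_sq (s := Finset.univ) (f := fun i => G (θ t) i)
        simpa using this
      have h5 : ∀ i : Fin n, (q i.castSucc - expDist (θ t) i.castSucc)^2 = (G (θ t) i)^2 := by
        intro i
        rw [hGdef]
        simp only
        ring
      simp only [h5]
      nlinarith [Finset.sum_nonneg (fun i (_ : i ∈ Finset.univ) => sq_nonneg (G (θ t) i))]
    calc f t ≤ ∑ i, (q i - expDist (θ t) i)^2 / expDist (θ t) i := h1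
      _ ≤ ∑ i, (q i - expDist (θ t) i)^2 / δ := h2
      _ = (∑ i, (q i - expDist (θ t) i)^2) / δ := by rw [Finset.sum_div]
      _ ≤ ((n+1) * ‖G (θ t)‖^2) / δ := by gcongr
      _ = ((n+1)/δ) * ‖G (θ t)‖^2 := by ring
  -- constants
  set m0 : ℝ := δ / (2*(n+1)) with hm0def
  have hm0pos : 0 < m0 := by rw [hm0def]; positivity
  set m : ℝ := min m0 lam with hmdef
  have hmpos : 0 < m := lt_min hm0pos hlam0
  have hmlam : m ≤ lam := min_le_right _ _
  -- Gronwall, upper: f t ≤ f 0 * exp (-2 m t)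
  have hgron_up : ∀ t ≥ (0:ℝ), f t ≤ f 0 * Real.exp (-(2*m) * t) := by
    intro t ht
    have hanti : AntitoneOn (fun t => f t * Real.exp ((2*m)*t)) (Set.Ici 0) := by
      apply antiAux (g := fun t => (-‖G (θ t)‖^2) * Real.exp ((2*m)*t)
        + f t * ((2*m) * Real.exp ((2*m)*t)))
      · intro t ht
        exact (hf' t ht).mul (expAux (2*m) t)
      · intro t ht
        have h2 := hup t ht
        have hn1 : (0:ℝ) < (n:ℝ)+1 := by positivity
        have key : δ * f t ≤ ((n:ℝ)+1) * ‖G (θ t)‖^2 := by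
          calc δ * f t ≤ δ * (((n:ℝ)+1)/δ * ‖G (θ t)‖^2) := by
                apply mul_le_mul_of_nonneg_left h2 hδpos.le
            _ = ((n:ℝ)+1) * ‖G (θ t)‖^2 := by field_simp
        have hmform : 2 * m0 * f t = (δ * f t) / ((n:ℝ)+1) := by
          rw [hm0def]; field_simp
        have h3 : 2 * m0 * f t ≤ ‖G (θ t)‖^2 := by
          rw [hmform, div_le_iff₀ hn1]
          nlinarith [key]
        have h4 : 2 * m * f t ≤ 2 * m0 * f t := by
          have hmm0 : m ≤ m0 := min_le_left _ _
          nlinarith [hfnn t]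
        have he := Real.exp_pos ((2*m)*t)
        nlinarith [he]
    have h0 : f t * Real.exp ((2*m)*t) ≤ f 0 := by
      have := hanti Set.self_mem_Ici ht ht
      simpa using this
    have he := Real.exp_pos ((2*m)*t)
    rw [neg_mul, Real.exp_neg]
    calc f t = f t * Real.exp (2*m*t) * (Real.exp (2*m*t))⁻¹ := by field_simp
      _ ≤ f 0 * (Real.exp (2*m*t))⁻¹ := mul_le_mul_of_nonneg_right h0 (by positivity)
  -- Gronwall, lower: f 0 * exp(-(2*lam) t) ≤ f t
  have hgron_lo : ∀ t ≥ (0:ℝ), f 0 * Real.exp (-(2*lam) * t) ≤ f t := by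
    intro t ht
    have hmono : MonotoneOn (fun t => f t * Real.exp ((2*lam)*t)) (Set.Ici 0) := by
      apply monoAux (g := fun t => (-‖G (θ t)‖^2) * Real.exp ((2*lam)*t)
        + f t * ((2*lam) * Real.exp ((2*lam)*t)))
      · intro t ht
        exact (hf' t ht).mul (expAux (2*lam) t)
      · intro t ht
        have h1 := hlow t ht
        have he := Real.exp_pos ((2*lam)*t)
        nlinarith [he]
    have h0 := hmono Set.self_mem_Ici ht ht
    simp only [mul_zero, Real.exp_zero, mul_one] at h0
    have he := Real.exp_pos ((2*lam)*t)
    rw [neg_mul, Real.exp_neg]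
    calc f 0 * (Real.exp ((2*lam)*t))⁻¹ ≤ (f t * Real.exp ((2*lam)*t)) * (Real.exp ((2*lam)*t))⁻¹ := by
          apply mul_le_mul_of_nonneg_right h0 (by positivity)
      _ = f t := by field_simp
  refine ⟨m, lam, f 0, hmpos, hmlam, hlam1, hc, ?_⟩
  intro t ht
  refine ⟨?_, ?_, ?_⟩
  · apply mul_le_mul_of_nonneg_left _ hc.le
    apply Real.exp_le_exp.mpr
    nlinarith [hlam1, ht]
  · have := hgron_lo t ht
    calc f 0 * Real.exp (-2 * lam * t) = f 0 * Real.exp (-(2*lam) * t) := by ring_nf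
      _ ≤ f t := this
  · have := hgron_up t ht
    calc f t ≤ f 0 * Real.exp (-(2*m) * t) := this
      _ = f 0 * Real.exp (-2 * m * t) := by ring_nf

end
end

section
/- Let q, p₀ ∈ S_n with p₀ ≠ q, and let η : [0, ∞) → Δ_n be differentiable with η(0) = η_{p₀} and η'(t) = −∇L_q(η(t)) for all t ≥ 0, where L_q is the loss in η coordinates. Then there exist constants 1 < m ≤ L, constants c, c̄ > 0 and a time T ≥ 0 such that c·e^{−2Lt} ≤ L_q(η(t)) ≤ c̄·e^{−2mt} ≤ c̄·e^{−2t} for all t ≥ T; i.e., L_q(η(t)) converges to zero exponentially with rate higher than 2. -/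
open Filter

noncomputable section

lemma Leta_formula {n : ℕ} (q : Fin (n+1) → ℝ) (η : E n) :
    Leta q η = (∑ j : Fin n, q j.castSucc * Real.log (q j.castSucc / η j))
      + q (Fin.last n) * Real.log (q (Fin.last n) / (1 - ∑ j, η j)) := by
  unfold Leta KL mixDist
  rw [Fin.sum_univ_castSucc]
  simp [Fin.snoc_castSucc, Fin.snoc_last]

def gradL {n : ℕ} (q : Fin (n+1) → ℝ) (η : E n) : E n :=
  WithLp.toLp 2 (fun j => -(q j.castSucc / η j) + q (Fin.last n) / (1 - ∑ i, η i))

lemma isOpen_Δset (n : ℕ) : IsOpen (Δset n) := by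
  have h1 : IsOpen {η : E n | ∀ i, 0 < η i} := by
    have : {η : E n | ∀ i, 0 < η i} = ⋂ i, {η : E n | 0 < η i} := by
      ext; simp [Set.mem_iInter]
    rw [this]
    exact isOpen_iInter_of_finite fun i =>
      isOpen_lt continuous_const (EuclideanSpace.proj i).continuous
  have h2 : IsOpen {η : E n | ∑ i, η i < 1} := by
    exact isOpen_lt (continuous_finset_sum _ fun i _ => (EuclideanSpace.proj i).continuous) continuous_const
  exact (h1.inter h2 : _)

lemma sum_pos_lt {n : ℕ} {η : E n} (hη : η ∈ Δset n) : 0 < 1 - ∑ i, η i :=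
  sub_pos.2 hη.2

lemma hasGradientAt_Leta {n : ℕ} (q : Fin (n+1) → ℝ) (hq : ∀ i, 0 < q i)
    {η : E n} (hη : η ∈ Δset n) : HasGradientAt (Leta q) (gradL q η) η := by
  have hs : 0 < 1 - ∑ i, η i := sum_pos_lt hη
  have hj2 : ∀ j : Fin n, HasFDerivAt
      (fun η' : E n => q j.castSucc * (Real.log (q j.castSucc) - Real.log (η' j)))
      (q j.castSucc • (-((η j)⁻¹ • (EuclideanSpace.proj j : E n →L[ℝ] ℝ)))) η := by
    intro j
    have hj : HasFDerivAt (fun η' : E n => Real.log (η' j))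
        ((η j)⁻¹ • (EuclideanSpace.proj j : E n →L[ℝ] ℝ)) η :=
      (EuclideanSpace.proj (𝕜 := ℝ) j).hasFDerivAt.log (ne_of_gt (hη.1 j))
    exact (hj.const_sub (Real.log (q j.castSucc))).const_mul (q j.castSucc)
  have hsum2 := HasFDerivAt.fun_sum (fun j (_ : j ∈ Finset.univ) => hj2 j)
  have hl1 : HasFDerivAt (fun η' : E n => (1:ℝ) - ∑ j, η' j)
      (-(∑ j : Fin n, (EuclideanSpace.proj j : E n →L[ℝ] ℝ))) η :=
    (HasFDerivAt.fun_sum (fun j (_ : j ∈ Finset.univ) =>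
      (EuclideanSpace.proj (𝕜 := ℝ) j).hasFDerivAt)).const_sub 1
  have hl2 := hl1.log (ne_of_gt hs)
  have hl3 := (hl2.const_sub (Real.log (q (Fin.last n)))).const_mul (q (Fin.last n))
  have hF2 := hsum2.add hl3
  have hcongr : Leta q =ᶠ[nhds η]
      (fun η' : E n => (∑ j : Fin n, q j.castSucc * (Real.log (q j.castSucc) - Real.log (η' j)))
        + q (Fin.last n) * (Real.log (q (Fin.last n)) - Real.log (1 - ∑ j, η' j))) := by
    refine Filter.eventually_of_mem ((isOpen_Δset n).mem_nhds hη) (fun x hx => ?_)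
    rw [Leta_formula]
    congr 1
    · exact Finset.sum_congr rfl fun j _ => by
        rw [Real.log_div (ne_of_gt (hq _)) (ne_of_gt (hx.1 j))]
    · rw [Real.log_div (ne_of_gt (hq _)) (ne_of_gt (sum_pos_lt hx))]
  have hF := hF2.congr_of_eventuallyEq hcongr
  have hgoal : HasFDerivAt (Leta q) ((InnerProductSpace.toDual ℝ (E n)) (gradL q η)) η := by
    refine hF.congr_fderiv (Eq.symm ?_)
    apply ContinuousLinearMap.ext
    intro v
    simp only [InnerProductSpace.toDual_apply_apply, PiLp.inner_apply, RCLike.inner_apply,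
      starRingEnd_apply, star_trivial, ContinuousLinearMap.add_apply,
      ContinuousLinearMap.sum_apply, ContinuousLinearMap.smul_apply,
      ContinuousLinearMap.neg_apply, PiLp.proj_apply, smul_eq_mul, gradL]
    simp only [mul_add]
    rw [Finset.sum_add_distrib]
    congr 1
    · exact Finset.sum_congr rfl fun j _ => by field_simp
    · rw [← Finset.sum_mul]
      field_simp
  simpa using hgoal.hasGradientAt

lemma taylor1d {G G₁ G₂ : ℝ → ℝ} {c : ℝ}
    (hG : ∀ s ∈ Set.Icc (0:ℝ) 1, HasDerivAt G (G₁ s) s)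
    (hG1 : ∀ s ∈ Set.Icc (0:ℝ) 1, HasDerivAt G₁ (G₂ s) s)
    (h2 : ∀ s ∈ Set.Icc (0:ℝ) 1, c ≤ G₂ s) :
    G 0 + G₁ 0 + c / 2 ≤ G 1 := by
  set ψ : ℝ → ℝ := fun s => G₁ s - (G₁ 0 + c * s) with hψdef
  have hψd : ∀ s ∈ Set.Icc (0:ℝ) 1, HasDerivAt ψ (G₂ s - c) s := by
    intro s hs
    have h1 : HasDerivAt (fun x : ℝ => G₁ 0 + c * x) c s := by
      simpa using ((hasDerivAt_id s).const_mul c).const_add (G₁ 0)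
    exact (hG1 s hs).sub h1
  have hψ0 : ψ 0 = 0 := by simp [hψdef]
  have hψmono : MonotoneOn ψ (Set.Icc 0 1) := by
    apply monotoneOn_of_deriv_nonneg (convex_Icc 0 1)
    · intro s hs; exact (hψd s hs).continuousAt.continuousWithinAt
    · intro s hs
      rw [interior_Icc] at hs
      exact ((hψd s (Set.mem_Icc_of_Ioo hs)).differentiableAt).differentiableWithinAt
    · intro s hs
      rw [interior_Icc] at hs
      rw [(hψd s (Set.mem_Icc_of_Ioo hs)).deriv]
      have := h2 s (Set.mem_Icc_of_Ioo hs); linarith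
  set φ : ℝ → ℝ := fun s => G s - (G 0 + G₁ 0 * s + c/2 * s^2) with hφdef
  have hφd : ∀ s ∈ Set.Icc (0:ℝ) 1, HasDerivAt φ (ψ s) s := by
    intro s hs
    have ha := ((hasDerivAt_id s).const_mul (G₁ 0)).const_add (G 0)
    have hb := (hasDerivAt_pow 2 s).const_mul (c/2)
    have h1 := ha.add hb
    have h2' : HasDerivAt (fun x : ℝ => G 0 + G₁ 0 * x + c/2 * x^2) (G₁ 0 + c * s) s := by
      exact (ha.fun_add hb).congr_deriv (by norm_num; ring)
    exact (hG s hs).sub h2'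
  have hφmono : MonotoneOn φ (Set.Icc 0 1) := by
    apply monotoneOn_of_deriv_nonneg (convex_Icc 0 1)
    · intro s hs; exact (hφd s hs).continuousAt.continuousWithinAt
    · intro s hs
      rw [interior_Icc] at hs
      exact ((hφd s (Set.mem_Icc_of_Ioo hs)).differentiableAt).differentiableWithinAt
    · intro s hs
      rw [interior_Icc] at hs
      rw [(hφd s (Set.mem_Icc_of_Ioo hs)).deriv]
      have h0 : ψ 0 ≤ ψ s := hψmono (Set.left_mem_Icc.2 zero_le_one)
        (Set.mem_Icc_of_Ioo hs) (le_of_lt hs.1)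
      rw [hψ0] at h0; exact h0
  have := hφmono (Set.left_mem_Icc.2 zero_le_one) (Set.right_mem_Icc.2 zero_le_one) zero_le_one
  simp only [hφdef] at this
  nlinarith [this]

open RealInnerProductSpace in
lemma convex_pos {a b s : ℝ} (ha : 0 < a) (hb : 0 < b) (h0 : 0 ≤ s) (h1 : s ≤ 1) :
    0 < a + s * (b - a) := by
  rcases le_total a b with h | h
  · nlinarith [mul_nonneg h0 (sub_nonneg.2 h)]
  · nlinarith [mul_nonneg (sub_nonneg.2 h1) (sub_nonneg.2 h)]

lemma Leta_formula' {n : ℕ} (q : Fin (n+1) → ℝ) (hq : ∀ i, 0 < q i) {η : E n}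
    (hη : η ∈ Δset n) :
    Leta q η = (∑ j : Fin n, q j.castSucc * (Real.log (q j.castSucc) - Real.log (η j)))
      + q (Fin.last n) * (Real.log (q (Fin.last n)) - Real.log (1 - ∑ j, η j)) := by
  rw [Leta_formula]
  congr 1
  · exact Finset.sum_congr rfl fun j _ => by
      rw [Real.log_div (ne_of_gt (hq _)) (ne_of_gt (hη.1 j))]
  · rw [Real.log_div (ne_of_gt (hq _)) (ne_of_gt (sum_pos_lt hη))]

lemma norm_sq_eucl {n : ℕ} (v : E n) : ‖v‖^2 = ∑ j, (v j)^2 := by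
  rw [EuclideanSpace.norm_eq, Real.sq_sqrt (by positivity)]
  exact Finset.sum_congr rfl fun j _ => by rw [Real.norm_eq_abs, sq_abs]

lemma hasDerivAt_aff (a b s : ℝ) : HasDerivAt (fun t : ℝ => a + t * b) b s := by
  simpa using ((hasDerivAt_id s).mul_const b).const_add a

lemma hasDerivAt_aff' (a b s : ℝ) : HasDerivAt (fun t : ℝ => a - t * b) (-b) s := by
  simpa using ((hasDerivAt_id s).mul_const b).const_sub a

open RealInnerProductSpace in
lemma seg {n : ℕ} (q : Fin (n+1) → ℝ) (hq : ∀ i, 0 < q i) {x y : E n}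
    (hx : x ∈ Δset n) (hy : y ∈ Δset n) {m : ℝ} (hm : 0 ≤ m)
    (hH : ∀ s ∈ Set.Icc (0:ℝ) 1, ∀ j : Fin n, m * (x j + s * (y j - x j))^2 ≤ q j.castSucc) :
    Leta q x + ⟪gradL q x, y - x⟫ + m * ‖y - x‖^2 / 2 ≤ Leta q y := by
  set SA : ℝ := ∑ j, x j with hSA
  set SB : ℝ := ∑ j : Fin n, (y j - x j) with hSBdef
  have hSB : SB = (∑ j, y j) - ∑ j, x j := Finset.sum_sub_distrib _ _
  have hdpos : ∀ s ∈ Set.Icc (0:ℝ) 1, ∀ j : Fin n, 0 < x j + s * (y j - x j) :=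
    fun s hs j => convex_pos (hx.1 j) (hy.1 j) hs.1 hs.2
  have hDpos : ∀ s ∈ Set.Icc (0:ℝ) 1, 0 < (1 - SA) - s * SB := by
    intro s hs
    have h := convex_pos (sum_pos_lt hx) (sum_pos_lt hy) hs.1 hs.2
    rw [hSB]; rw [hSA]; nlinarith [h]
  set G : ℝ → ℝ := fun s =>
    (∑ j : Fin n, q j.castSucc * (Real.log (q j.castSucc) - Real.log (x j + s * (y j - x j))))
      + q (Fin.last n) * (Real.log (q (Fin.last n)) - Real.log ((1 - SA) - s * SB)) with hGdef
  set G₁ : ℝ → ℝ := fun s =>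
    (∑ j : Fin n, q j.castSucc * (-((y j - x j) / (x j + s * (y j - x j)))))
      + q (Fin.last n) * (-((-SB) / ((1 - SA) - s * SB))) with hG1def
  set G₂ : ℝ → ℝ := fun s =>
    (∑ j : Fin n, q j.castSucc *
        (-((0 * (x j + s * (y j - x j)) - (y j - x j) * (y j - x j)) / (x j + s * (y j - x j))^2)))
      + q (Fin.last n) * (-((0 * ((1 - SA) - s * SB) - (-SB) * (-SB)) / ((1 - SA) - s * SB)^2))
    with hG2def
  have hGd : ∀ s ∈ Set.Icc (0:ℝ) 1, HasDerivAt G (G₁ s) s := by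
    intro s hs
    refine HasDerivAt.add (HasDerivAt.fun_sum fun j _ => ?_) ?_
    · exact (((hasDerivAt_aff (x j) (y j - x j) s).log
        (ne_of_gt (hdpos s hs j))).const_sub _).const_mul _
    · have h := (((hasDerivAt_aff' (1 - SA) SB s).log
        (ne_of_gt (hDpos s hs))).const_sub (Real.log (q (Fin.last n)))).const_mul (q (Fin.last n))
      simpa using h
  have hG1d : ∀ s ∈ Set.Icc (0:ℝ) 1, HasDerivAt G₁ (G₂ s) s := by
    intro s hs
    refine HasDerivAt.add (HasDerivAt.fun_sum fun j _ => ?_) ?_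
    · exact (((hasDerivAt_const s (y j - x j)).div (hasDerivAt_aff (x j) (y j - x j) s)
        (ne_of_gt (hdpos s hs j))).neg).const_mul _
    · exact (((hasDerivAt_const s (-SB)).div (hasDerivAt_aff' (1 - SA) SB s)
        (ne_of_gt (hDpos s hs))).neg).const_mul _
  have hbound : ∀ s ∈ Set.Icc (0:ℝ) 1, m * ‖y - x‖^2 ≤ G₂ s := by
    intro s hs
    rw [hG2def]
    have hterm : ∀ j : Fin n, m * (y j - x j)^2 ≤ q j.castSucc *
        (-((0 * (x j + s * (y j - x j)) - (y j - x j) * (y j - x j)) / (x j + s * (y j - x j))^2)) := by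
      intro j
      have hd := hdpos s hs j
      have hH' := hH s hs j
      rw [div_eq_mul_inv]
      have hinv : (0:ℝ) < ((x j + s * (y j - x j))^2)⁻¹ := by positivity
      have h2 : m * (y j - x j)^2 * (x j + s * (y j - x j))^2 ≤
          q j.castSucc * ((y j - x j) * (y j - x j)) := by nlinarith [sq_nonneg (y j - x j)]
      calc m * (y j - x j)^2
          = m * (y j - x j)^2 * (x j + s * (y j - x j))^2 * ((x j + s * (y j - x j))^2)⁻¹ := by
            exact (mul_inv_cancel_right₀ (pow_pos hd 2).ne' _).symm
        _ ≤ q j.castSucc * ((y j - x j) * (y j - x j)) * ((x j + s * (y j - x j))^2)⁻¹ := by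
            apply mul_le_mul_of_nonneg_right h2 (le_of_lt hinv)
        _ = q j.castSucc * (-((0 * (x j + s * (y j - x j)) - (y j - x j) * (y j - x j)) *
              ((x j + s * (y j - x j))^2)⁻¹)) := by ring
    have hlast : 0 ≤ q (Fin.last n) *
        (-((0 * ((1 - SA) - s * SB) - (-SB) * (-SB)) / ((1 - SA) - s * SB)^2)) := by
      have := hq (Fin.last n)
      have h2 : (0 * ((1 - SA) - s * SB) - (-SB) * (-SB)) / ((1 - SA) - s * SB)^2 ≤ 0 := by
        apply div_nonpos_of_nonpos_of_nonneg (by nlinarith [sq_nonneg SB]) (sq_nonneg _)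
      nlinarith [this, h2]
    have hsum := Finset.sum_le_sum (fun j (_ : j ∈ Finset.univ) => hterm j)
    rw [norm_sq_eucl]
    have hsub : ∀ j : Fin n, (y - x) j = y j - x j := fun j => rfl
    calc m * ∑ j, ((y - x) j)^2 = ∑ j : Fin n, m * (y j - x j)^2 := by
          rw [Finset.mul_sum]; exact Finset.sum_congr rfl fun j _ => by rw [hsub]
      _ ≤ _ := le_add_of_le_of_nonneg hsum hlast
  have key := taylor1d hGd hG1d hbound
  have e0 : G 0 = Leta q x := by
    rw [hGdef, Leta_formula' q hq hx]
    simp [hSA]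
  have e1 : G 1 = Leta q y := by
    rw [hGdef, Leta_formula' q hq hy]
    have h1 : ∀ j : Fin n, x j + 1 * (y j - x j) = y j := fun j => by ring
    have h2 : (1:ℝ) - SA - 1 * SB = 1 - ∑ j, y j := by rw [hSB, hSA]; ring
    simp only [h1, h2]
  have e2 : ⟪gradL q x, y - x⟫ = G₁ 0 := by
    rw [hG1def]
    simp only [PiLp.inner_apply, RCLike.inner_apply, starRingEnd_apply, star_trivial, gradL]
    have hsub : ∀ j : Fin n, (y - x) j = y j - x j := fun j => rfl
    simp only [hsub, mul_add, zero_mul, add_zero, mul_zero, sub_zero]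
    rw [Finset.sum_add_distrib]
    congr 1
    · exact Finset.sum_congr rfl fun j _ => by
        have := ne_of_gt (hx.1 j); field_simp
    · rw [← Finset.sum_mul, ← hSBdef, ← hSA]
      ring
  rw [← e0, ← e1, e2]
  convert key using 2

lemma coord_lt_one {n : ℕ} {η : E n} (hη : η ∈ Δset n) (j : Fin n) : η j < 1 :=
  lt_of_le_of_lt (Finset.single_le_sum (f := fun i => η i)
    (fun i _ => (hη.1 i).le) (Finset.mem_univ j)) hη.2

lemma abs_coord_le_norm {n : ℕ} (v : E n) (j : Fin n) : |v j| ≤ ‖v‖ := by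
  have h1 : (v j)^2 ≤ ‖v‖^2 := by
    rw [norm_sq_eucl]
    exact Finset.single_le_sum (f := fun i => (v i)^2) (fun i _ => sq_nonneg _)
      (Finset.mem_univ j)
  calc |v j| = Real.sqrt ((v j)^2) := (Real.sqrt_sq_eq_abs _).symm
    _ ≤ Real.sqrt (‖v‖^2) := Real.sqrt_le_sqrt h1
    _ = ‖v‖ := Real.sqrt_sq (norm_nonneg _)

lemma etaCoord_mem {n : ℕ} {q : Fin (n+1) → ℝ} (hq : q ∈ simplex n) :
    etaCoord q ∈ Δset n := by
  have h1 := hq.2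
  rw [Fin.sum_univ_castSucc] at h1
  exact ⟨fun j => hq.1 j.castSucc, by have := hq.1 (Fin.last n); show (∑ j : Fin n, q j.castSucc) < 1; linarith⟩

lemma one_sub_sum_eta {n : ℕ} {q : Fin (n+1) → ℝ} (hq : q ∈ simplex n) :
    1 - (∑ j : Fin n, (etaCoord q) j) = q (Fin.last n) := by
  have h1 := hq.2
  rw [Fin.sum_univ_castSucc] at h1
  show 1 - (∑ j : Fin n, q j.castSucc) = q (Fin.last n)
  linarith

lemma gradL_etaCoord {n : ℕ} {q : Fin (n+1) → ℝ} (hq : q ∈ simplex n) :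
    gradL q (etaCoord q) = 0 := by
  ext j
  show -(q j.castSucc / (etaCoord q) j) + q (Fin.last n) / (1 - ∑ i, (etaCoord q) i) = 0
  rw [one_sub_sum_eta hq]
  show -(q j.castSucc / q j.castSucc) + q (Fin.last n) / q (Fin.last n) = 0
  rw [div_self (ne_of_gt (hq.1 _)), div_self (ne_of_gt (hq.1 _))]
  ring

lemma Leta_etaCoord {n : ℕ} {q : Fin (n+1) → ℝ} (hq : q ∈ simplex n) :
    Leta q (etaCoord q) = 0 := by
  rw [Leta_formula' q hq.1 (etaCoord_mem hq), one_sub_sum_eta hq]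
  show (∑ j : Fin n, q j.castSucc * (Real.log (q j.castSucc) - Real.log (q j.castSucc)))
    + q (Fin.last n) * (Real.log (q (Fin.last n)) - Real.log (q (Fin.last n))) = 0
  simp

open RealInnerProductSpace in
lemma seg_min {n : ℕ} {q : Fin (n+1) → ℝ} (hq : q ∈ simplex n) {η : E n}
    (hη : η ∈ Δset n) {m : ℝ} (hm : 0 ≤ m)
    (hH : ∀ s ∈ Set.Icc (0:ℝ) 1, ∀ j : Fin n,
      m * ((etaCoord q) j + s * (η j - (etaCoord q) j))^2 ≤ q j.castSucc) :
    m * ‖η - etaCoord q‖^2 / 2 ≤ Leta q η := by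
  have h := seg q hq.1 (etaCoord_mem hq) hη hm hH
  rw [Leta_etaCoord hq, gradL_etaCoord hq] at h
  simpa using h

open RealInnerProductSpace in
lemma seg_pl {n : ℕ} {q : Fin (n+1) → ℝ} (hq : q ∈ simplex n) {η : E n}
    (hη : η ∈ Δset n) {m : ℝ} (hm : 0 < m)
    (hH : ∀ s ∈ Set.Icc (0:ℝ) 1, ∀ j : Fin n,
      m * (η j + s * ((etaCoord q) j - η j))^2 ≤ q j.castSucc) :
    Leta q η ≤ ‖gradL q η‖^2 / (2*m) := by
  have h := seg q hq.1 hη (etaCoord_mem hq) hm.le hH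
  rw [Leta_etaCoord hq] at h
  have hinner : ⟪gradL q η, etaCoord q - η⟫ ≥ -(‖gradL q η‖ * ‖etaCoord q - η‖) := by
    have := abs_real_inner_le_norm (gradL q η) (etaCoord q - η)
    have h2 := abs_le.1 this
    linarith [h2.1]
  have hnorm : ‖etaCoord q - η‖ = ‖η - etaCoord q‖ := norm_sub_rev _ _
  set g := ‖gradL q η‖ with hg
  set d := ‖etaCoord q - η‖ with hd
  have h3 : Leta q η ≤ g * d - m * d^2/2 := by linarith
  have h4 : g * d - m * d^2/2 ≤ g^2/(2*m) := by
    rw [le_div_iff₀ (by linarith : (0:ℝ) < 2*m)]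
    nlinarith [sq_nonneg (g - m*d)]
  linarith

lemma cond_global {n : ℕ} {q : Fin (n+1) → ℝ} {m₀ : ℝ} (hm₀ : 0 ≤ m₀)
    (hm₀le : ∀ j : Fin n, m₀ ≤ q j.castSucc) {x y : E n}
    (hx : x ∈ Δset n) (hy : y ∈ Δset n) :
    ∀ s ∈ Set.Icc (0:ℝ) 1, ∀ j : Fin n, m₀ * (x j + s * (y j - x j))^2 ≤ q j.castSucc := by
  intro s hs j
  have hz0 : 0 < x j + s * (y j - x j) := convex_pos (hx.1 j) (hy.1 j) hs.1 hs.2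
  have hz1 : x j + s * (y j - x j) < 1 := by
    have h := convex_pos (sub_pos.2 (coord_lt_one hx j)) (sub_pos.2 (coord_lt_one hy j))
      hs.1 hs.2
    nlinarith [h]
  nlinarith [hm₀le j, mul_pos hz0 (sub_pos.2 hz1), mul_nonneg hm₀ (mul_pos hz0 (sub_pos.2 hz1)).le]

lemma cond_ball {n : ℕ} {q : Fin (n+1) → ℝ} {m δ : ℝ} (hm : 0 ≤ m) (hδ : 0 < δ)
    (hmq : ∀ j : Fin n, m * (q j.castSucc + δ)^2 ≤ q j.castSucc) {x y : E n}
    (hx : x ∈ Δset n) (hy : y ∈ Δset n)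
    (hxb : ‖x - etaCoord q‖ ≤ δ) (hyb : ‖y - etaCoord q‖ ≤ δ) :
    ∀ s ∈ Set.Icc (0:ℝ) 1, ∀ j : Fin n, m * (x j + s * (y j - x j))^2 ≤ q j.castSucc := by
  intro s hs j
  have hxj : |x j - q j.castSucc| ≤ δ := by
    have := abs_coord_le_norm (x - etaCoord q) j
    exact le_trans (by rw [show (x - etaCoord q) j = x j - q j.castSucc from rfl] at this; exact this) hxb
  have hyj : |y j - q j.castSucc| ≤ δ := by
    have := abs_coord_le_norm (y - etaCoord q) j
    exact le_trans (by rw [show (y - etaCoord q) j = y j - q j.castSucc from rfl] at this; exact this) hyb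
  have hz0 : 0 < x j + s * (y j - x j) := convex_pos (hx.1 j) (hy.1 j) hs.1 hs.2
  have hxu := (abs_le.1 hxj).2
  have hyu := (abs_le.1 hyj).2
  have hzu : x j + s * (y j - x j) ≤ q j.castSucc + δ := by nlinarith [hs.1, hs.2]
  have hsq : (x j + s * (y j - x j))^2 ≤ (q j.castSucc + δ)^2 := by nlinarith
  nlinarith [hmq j]

lemma grad_lip {n : ℕ} {q : Fin (n+1) → ℝ} (hq : q ∈ simplex n) {δ : ℝ}
    (hδ1 : ∀ j : Fin n, 2*δ ≤ q j.castSucc) (hδ2 : 2 * (n * δ) ≤ q (Fin.last n))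
    {η : E n} (hη : η ∈ Δset n) (hb : ‖η - etaCoord q‖ ≤ δ) :
    ‖gradL q η‖^2 ≤
      (∑ j : Fin n, (1/(q j.castSucc/2) + n/(q (Fin.last n)/2))^2) * ‖η - etaCoord q‖^2 := by
  set d : E n := η - etaCoord q with hd
  have hdj : ∀ j, |d j| ≤ ‖d‖ := fun j => abs_coord_le_norm d j
  have hdjval : ∀ j, d j = η j - q j.castSucc := fun j => rfl
  have hnd : 0 ≤ ‖d‖ := norm_nonneg d
  have hlastd : |(1 - ∑ i, η i) - q (Fin.last n)| ≤ n * ‖d‖ := by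
    have h1 : (1 - ∑ i, η i) - q (Fin.last n) = -(∑ j : Fin n, d j) := by
      have := one_sub_sum_eta hq
      have h2 : ∑ j : Fin n, d j = (∑ j, η j) - ∑ j : Fin n, (etaCoord q) j :=
        Finset.sum_sub_distrib _ _
      rw [h2]; show _ = -((∑ j, η j) - ∑ j : Fin n, q j.castSucc)
      have h3 : (∑ j : Fin n, (etaCoord q) j) = ∑ j : Fin n, q j.castSucc := rfl
      rw [h3] at this; linarith
    rw [h1, abs_neg]
    calc |∑ j : Fin n, d j| ≤ ∑ j : Fin n, |d j| := Finset.abs_sum_le_sum_abs _ _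
      _ ≤ ∑ _j : Fin n, ‖d‖ := Finset.sum_le_sum fun j _ => hdj j
      _ = n * ‖d‖ := by rw [Finset.sum_const, Finset.card_univ, Fintype.card_fin]; simp
  have hηlb : ∀ j, q j.castSucc / 2 ≤ η j := by
    intro j
    have h1 := (abs_le.1 (le_trans (hdj j) hb)).1
    rw [hdjval j] at h1
    have := hδ1 j; linarith
  have hetabarlb : q (Fin.last n) / 2 ≤ 1 - ∑ i, η i := by
    have h1 := (abs_le.1 hlastd).1
    have h2 : n * ‖d‖ ≤ n * δ := by
      apply mul_le_mul_of_nonneg_left hb (Nat.cast_nonneg n)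
    linarith
  have hgj : ∀ j : Fin n, |gradL q η j| ≤ (1/(q j.castSucc/2) + n/(q (Fin.last n)/2)) * ‖d‖ := by
    intro j
    have hqj := hq.1 j.castSucc
    have hql := hq.1 (Fin.last n)
    have hηj := hη.1 j
    have hetabarpos := sum_pos_lt hη
    have hgid : gradL q η j = (η j - q j.castSucc)/η j
        + (q (Fin.last n) - (1 - ∑ i, η i))/(1 - ∑ i, η i) := by
      show -(q j.castSucc / η j) + q (Fin.last n) / (1 - ∑ i, η i) = _
      field_simp
      ring
    rw [hgid]
    have h1 : |(η j - q j.castSucc)/η j| ≤ ‖d‖ / (q j.castSucc/2) := by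
      rw [abs_div, abs_of_pos hηj]
      apply div_le_div₀ (by positivity) (by rw [← hdjval j]; exact le_trans (hdj j) le_rfl)
        (by linarith) (hηlb j)
    have h2 : |(q (Fin.last n) - (1 - ∑ i, η i))/(1 - ∑ i, η i)| ≤ (n * ‖d‖) / (q (Fin.last n)/2) := by
      rw [abs_div, abs_of_pos hetabarpos, abs_sub_comm]
      apply div_le_div₀ (by positivity) hlastd (by linarith) hetabarlb
    calc |(η j - q j.castSucc)/η j + (q (Fin.last n) - (1 - ∑ i, η i))/(1 - ∑ i, η i)|
        ≤ |(η j - q j.castSucc)/η j| + |(q (Fin.last n) - (1 - ∑ i, η i))/(1 - ∑ i, η i)| :=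
          abs_add_le _ _
      _ ≤ ‖d‖ / (q j.castSucc/2) + (n * ‖d‖) / (q (Fin.last n)/2) := add_le_add h1 h2
      _ = (1/(q j.castSucc/2) + n/(q (Fin.last n)/2)) * ‖d‖ := by ring
  rw [norm_sq_eucl (gradL q η), Finset.sum_mul]
  apply Finset.sum_le_sum
  intro j _
  have h := hgj j
  have hK : 0 ≤ (1/(q j.castSucc/2) + n/(q (Fin.last n)/2)) := by
    have := hq.1 j.castSucc; have := hq.1 (Fin.last n); positivity
  calc (gradL q η j)^2 = |gradL q η j|^2 := (sq_abs _).symm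
    _ ≤ ((1/(q j.castSucc/2) + n/(q (Fin.last n)/2)) * ‖d‖)^2 := by
        apply pow_le_pow_left₀ (abs_nonneg _) h
    _ = (1/(q j.castSucc/2) + n/(q (Fin.last n)/2))^2 * ‖d‖^2 := by ring

set_option maxHeartbeats 1600000 in
/-- Convergence of the `η`-gradient flow: exponential rate higher than 2. -/
theorem stmt_7 {n : ℕ} (q p₀ : Fin (n+1) → ℝ)
    (hq : q ∈ simplex n) (hp₀ : p₀ ∈ simplex n) (hne : p₀ ≠ q)
    (η : ℝ → E n) (hmem : ∀ t ≥ (0 : ℝ), η t ∈ Δset n)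
    (hη0 : η 0 = etaCoord p₀)
    (hode : ∀ t ≥ (0 : ℝ), HasDerivAt η (-(gradient (Leta q) (η t))) t) :
    ∃ m L c cbar T : ℝ, 1 < m ∧ m ≤ L ∧ 0 < c ∧ 0 < cbar ∧ 0 ≤ T ∧
      ∀ t ≥ T,
        c * Real.exp (-2 * L * t) ≤ Leta q (η t) ∧
        Leta q (η t) ≤ cbar * Real.exp (-2 * m * t) ∧
        cbar * Real.exp (-2 * m * t) ≤ cbar * Real.exp (-2 * t) := by
  classical
  have hqpos := hq.1
  set ηq : E n := etaCoord q with hηqdef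
  have hηqmem : ηq ∈ Δset n := etaCoord_mem hq
  -- the initial point differs from the optimum in η coordinates
  have hη0ne : etaCoord p₀ ≠ ηq := by
    intro h
    apply hne
    funext i
    refine Fin.lastCases ?_ ?_ i
    · have h1 := hp₀.2; have h2 := hq.2
      rw [Fin.sum_univ_castSucc] at h1 h2
      have h3 : ∑ j : Fin n, p₀ j.castSucc = ∑ j : Fin n, q j.castSucc :=
        Finset.sum_congr rfl fun j _ => congrArg (fun v : E n => v j) h
      linarith
    · intro j; exact congrArg (fun v : E n => v j) h
  have hnpos : 0 < n := by
    rcases Nat.eq_zero_or_pos n with h | h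
    · exfalso; apply hη0ne; subst h; ext j; exact j.elim0
    · exact h
  have hne' : (Finset.univ : Finset (Fin n)).Nonempty := ⟨⟨0, hnpos⟩, Finset.mem_univ _⟩
  have hqlt1 : ∀ j : Fin n, q j.castSucc < 1 := by
    intro j
    have h2 := hq.2
    rw [Fin.sum_univ_castSucc] at h2
    have h3 : q j.castSucc ≤ ∑ j : Fin n, q j.castSucc :=
      Finset.single_le_sum (fun i _ => (hqpos i.castSucc).le) (Finset.mem_univ j)
    have := hqpos (Fin.last n); linarith
  -- global strong convexity constant
  set m₀ : ℝ := Finset.univ.inf' hne' (fun j => q j.castSucc) with hm₀def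
  have hm₀le : ∀ j : Fin n, m₀ ≤ q j.castSucc := fun j => Finset.inf'_le _ (Finset.mem_univ j)
  have hm₀pos : 0 < m₀ := by
    obtain ⟨j₀, -, hj₀⟩ := Finset.exists_mem_eq_inf' hne' (fun j => q j.castSucc)
    rw [hm₀def, hj₀]; exact hqpos _
  -- the radius δ
  set δ : ℝ := min (Finset.univ.inf' hne' (fun j => (Real.sqrt (q j.castSucc) - q j.castSucc)/2))
      (min (Finset.univ.inf' hne' (fun j => q j.castSucc / 2)) (q (Fin.last n) / (2*(n+1))))
      with hδdef
  have hqsqrt : ∀ j : Fin n, q j.castSucc < Real.sqrt (q j.castSucc) := by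
    intro j
    rw [Real.lt_sqrt (hqpos j.castSucc).le]
    nlinarith [hqpos j.castSucc, hqlt1 j]
  have hδpos : 0 < δ := by
    apply lt_min
    · exact (Finset.lt_inf'_iff hne').2 fun j _ => by nlinarith [hqsqrt j]
    · apply lt_min
      · exact (Finset.lt_inf'_iff hne').2 fun j _ => by nlinarith [hqpos j.castSucc]
      · exact div_pos (hqpos _) (by positivity)
  have hδ1 : ∀ j : Fin n, 2*δ ≤ q j.castSucc := by
    intro j
    have h1 : δ ≤ q j.castSucc / 2 :=
      le_trans (le_trans (min_le_right _ _) (min_le_left _ _))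
        (Finset.inf'_le _ (Finset.mem_univ j))
    linarith
  have hδ2 : 2 * ((n:ℝ) * δ) ≤ q (Fin.last n) := by
    have h1 : δ ≤ q (Fin.last n) / (2*((n:ℝ)+1)) :=
      le_trans (min_le_right _ _) (min_le_right _ _)
    have h2 : δ * (2*((n:ℝ)+1)) ≤ q (Fin.last n) :=
      (le_div_iff₀ (by positivity)).1 h1
    nlinarith [hδpos.le]
  -- local strong convexity constant m > 1
  set m : ℝ := Finset.univ.inf' hne' (fun j => q j.castSucc/(q j.castSucc + δ)^2) with hmdef
  have hm1 : 1 < m := by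
    refine (Finset.lt_inf'_iff hne').2 fun j _ => ?_
    have hqj := hqpos j.castSucc
    have hδa : δ ≤ (Real.sqrt (q j.castSucc) - q j.castSucc)/2 :=
      le_trans (min_le_left _ _) (Finset.inf'_le _ (Finset.mem_univ j))
    have h3 : q j.castSucc + δ < Real.sqrt (q j.castSucc) := by
      have := hqsqrt j; linarith
    have hqδ : 0 < q j.castSucc + δ := by linarith [hδpos]
    have h4 : (q j.castSucc + δ)^2 < Real.sqrt (q j.castSucc)^2 :=
      pow_lt_pow_left₀ h3 hqδ.le (by norm_num)
    rw [Real.sq_sqrt hqj.le] at h4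
    exact (one_lt_div (pow_pos hqδ 2)).2 h4
  have hmpos : 0 < m := lt_trans one_pos hm1
  have hmq : ∀ j : Fin n, m * (q j.castSucc + δ)^2 ≤ q j.castSucc := by
    intro j
    have h1 : m ≤ q j.castSucc/(q j.castSucc + δ)^2 := Finset.inf'_le _ (Finset.mem_univ j)
    have hqδ : 0 < q j.castSucc + δ := by have := hqpos j.castSucc; linarith [hδpos]
    have h2 : (0:ℝ) < (q j.castSucc + δ)^2 := pow_pos hqδ 2
    calc m * (q j.castSucc + δ)^2 ≤ (q j.castSucc/(q j.castSucc + δ)^2) * (q j.castSucc + δ)^2 :=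
          mul_le_mul_of_nonneg_right h1 h2.le
      _ = q j.castSucc := by field_simp
  -- Lipschitz constant
  set Csq : ℝ := ∑ j : Fin n, (1/(q j.castSucc/2) + (n:ℝ)/(q (Fin.last n)/2))^2 with hCsqdef
  have hCsqnn : 0 ≤ Csq := Finset.sum_nonneg fun j _ => sq_nonneg _
  set L : ℝ := max m (Csq/m) with hLdef
  have hmL : m ≤ L := le_max_left _ _
  have hLpos : 0 < L := lt_of_lt_of_le hmpos hmL
  -- pointwise inequalities
  have hball := fun {x y : E n} (hx : x ∈ Δset n) (hy : y ∈ Δset n)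
      (hxb : ‖x - ηq‖ ≤ δ) (hyb : ‖y - ηq‖ ≤ δ) =>
    cond_ball hmpos.le hδpos hmq hx hy hxb hyb
  have hglob := fun {x y : E n} (hx : x ∈ Δset n) (hy : y ∈ Δset n) =>
    cond_global hm₀pos.le hm₀le hx hy
  have hnormself : ‖ηq - ηq‖ ≤ δ := by simp [hδpos.le]
  have hlow : ∀ {x : E n}, x ∈ Δset n → m₀ * ‖x - ηq‖^2/2 ≤ Leta q x :=
    fun {x} hx => seg_min hq hx hm₀pos.le (hglob hηqmem hx)
  have hlowm : ∀ {x : E n}, x ∈ Δset n → ‖x - ηq‖ ≤ δ → m * ‖x - ηq‖^2/2 ≤ Leta q x :=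
    fun {x} hx hxb => seg_min hq hx hmpos.le (hball hηqmem hx hnormself hxb)
  have hpl₀ : ∀ {x : E n}, x ∈ Δset n → Leta q x ≤ ‖gradL q x‖^2/(2*m₀) :=
    fun {x} hx => seg_pl hq hx hm₀pos (hglob hx hηqmem)
  have hplm : ∀ {x : E n}, x ∈ Δset n → ‖x - ηq‖ ≤ δ → Leta q x ≤ ‖gradL q x‖^2/(2*m) :=
    fun {x} hx hxb => seg_pl hq hx hmpos (hball hx hηqmem hxb hnormself)
  have hfnn : ∀ {x : E n}, x ∈ Δset n → 0 ≤ Leta q x := by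
    intro x hx
    nlinarith [hlow hx, sq_nonneg ‖x - ηq‖, hm₀pos, mul_nonneg hm₀pos.le (sq_nonneg ‖x - ηq‖)]
  have hup : ∀ {x : E n}, x ∈ Δset n → ‖x - ηq‖ ≤ δ → ‖gradL q x‖^2 ≤ 2*L*(Leta q x) := by
    intro x hx hxb
    have h1 := grad_lip hq hδ1 hδ2 hx hxb
    have h2 := hlowm hx hxb
    have hL2 : Csq/m ≤ L := le_max_right _ _
    have h3 : ‖x - ηq‖^2 ≤ 2*(Leta q x)/m := by
      rw [le_div_iff₀ hmpos]; nlinarith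
    calc ‖gradL q x‖^2 ≤ Csq * ‖x - ηq‖^2 := h1
      _ ≤ Csq * (2*(Leta q x)/m) := mul_le_mul_of_nonneg_left h3 hCsqnn
      _ = (Csq/m) * (2*(Leta q x)) := by ring
      _ ≤ L * (2*(Leta q x)) := mul_le_mul_of_nonneg_right hL2 (by linarith [hfnn hx])
      _ = 2*L*(Leta q x) := by ring
  -- the Lyapunov function
  set V : ℝ → ℝ := fun t => Leta q (η t) with hVdef
  have hVd : ∀ t, 0 ≤ t → HasDerivAt V (-‖gradL q (η t)‖^2) t := by
    intro t ht
    have hg := hasGradientAt_Leta q hqpos (hmem t ht)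
    have hfd := hg.hasFDerivAt
    have hd := hode t ht
    rw [hg.gradient] at hd
    have hcomp := hfd.comp_hasDerivAt t hd
    have heq : ((InnerProductSpace.toDual ℝ (E n)) (gradL q (η t))) (-gradL q (η t))
        = -‖gradL q (η t)‖^2 := by
      rw [InnerProductSpace.toDual_apply_apply, inner_neg_right, real_inner_self_eq_norm_sq]
    rw [heq] at hcomp
    exact hcomp
  have hVcont : ∀ {s : Set ℝ}, s ⊆ Set.Ici 0 → ContinuousOn V s :=
    fun {s} hs t ht => ((hVd t (hs ht)).continuousAt).continuousWithinAt
  have hVnn : ∀ t, 0 ≤ t → 0 ≤ V t := fun t ht => hfnn (hmem t ht)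
  have hV0 : 0 < V 0 := by
    have h1 := hlow (hmem 0 le_rfl)
    have h2 : η 0 - ηq ≠ 0 := sub_ne_zero.2 (by rw [hη0]; exact hη0ne)
    have h3 : 0 < ‖η 0 - ηq‖ := norm_pos_iff.2 h2
    show 0 < Leta q (η 0)
    nlinarith [mul_pos hm₀pos (mul_pos h3 h3)]
  have hVanti : AntitoneOn V (Set.Ici 0) := by
    apply antitoneOn_of_deriv_nonpos (convex_Ici 0) (hVcont (subset_refl _))
    · intro t ht
      rw [interior_Ici] at ht
      exact (hVd t ht.le).differentiableAt.differentiableWithinAt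
    · intro t ht
      rw [interior_Ici] at ht
      rw [(hVd t ht.le).deriv]
      simp only [neg_nonpos]
      positivity
  have hWderiv : ∀ (a t : ℝ), 0 ≤ t → HasDerivAt (fun u => V u * Real.exp (2*a*u))
      ((-‖gradL q (η t)‖^2) * Real.exp (2*a*t) + V t * (Real.exp (2*a*t) * (2*a))) t := by
    intro a t ht
    have hexp : HasDerivAt (fun u : ℝ => Real.exp (2*a*u)) (Real.exp (2*a*t) * (2*a)) t := by
      have h := ((hasDerivAt_id t).const_mul (2*a)).exp
      simpa [mul_comm] using h
    exact (hVd t ht).mul hexp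
  have hWcont : ∀ (a : ℝ) {s : Set ℝ}, s ⊆ Set.Ici 0 →
      ContinuousOn (fun u => V u * Real.exp (2*a*u)) s := by
    intro a s hs
    exact (hVcont hs).mul (Real.continuous_exp.comp (continuous_const.mul continuous_id)).continuousOn
  have hMON : ∀ (a : ℝ) (s : Set ℝ), Convex ℝ s → s ⊆ Set.Ici 0 →
      (∀ t ∈ interior s, ‖gradL q (η t)‖^2 ≤ 2*a*(V t)) →
      MonotoneOn (fun u => V u * Real.exp (2*a*u)) s := by
    intro a s hconv hsub hbound
    apply monotoneOn_of_deriv_nonneg hconv (hWcont a hsub)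
    · intro t ht
      exact ((hWderiv a t (hsub (interior_subset ht))).differentiableAt).differentiableWithinAt
    · intro t ht
      rw [(hWderiv a t (hsub (interior_subset ht))).deriv]
      have h := hbound t ht
      nlinarith [Real.exp_pos (2*a*t)]
  have hANT : ∀ (a : ℝ) (s : Set ℝ), Convex ℝ s → s ⊆ Set.Ici 0 →
      (∀ t ∈ interior s, 2*a*(V t) ≤ ‖gradL q (η t)‖^2) →
      AntitoneOn (fun u => V u * Real.exp (2*a*u)) s := by
    intro a s hconv hsub hbound
    apply antitoneOn_of_deriv_nonpos hconv (hWcont a hsub)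
    · intro t ht
      exact ((hWderiv a t (hsub (interior_subset ht))).differentiableAt).differentiableWithinAt
    · intro t ht
      rw [(hWderiv a t (hsub (interior_subset ht))).deriv]
      have h := hbound t ht
      nlinarith [Real.exp_pos (2*a*t)]
  -- global exponential decay with rate m₀
  have hW₀anti : AntitoneOn (fun u => V u * Real.exp (2*m₀*u)) (Set.Ici 0) := by
    apply hANT m₀ _ (convex_Ici 0) (subset_refl _)
    intro t ht
    rw [interior_Ici] at ht
    have h1 := hpl₀ (hmem t ht.le)
    have h2 : V t * (2*m₀) ≤ ‖gradL q (η t)‖^2 := (le_div_iff₀ (by positivity)).1 h1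
    linarith [h2]
  have hdecay : ∀ t, 0 ≤ t → V t * Real.exp (2*m₀*t) ≤ V 0 := by
    intro t ht
    have h : V t * Real.exp (2*m₀*t) ≤ V 0 * Real.exp (2*m₀*0) :=
      hW₀anti (Set.self_mem_Ici) ht ht
    simpa using h
  -- ε and the entry time T
  set ε : ℝ := m₀ * δ^2/2 with hεdef
  have hεpos : 0 < ε := by
    have := mul_pos hm₀pos (pow_pos hδpos 2); rw [hεdef]; linarith
  have hballmem : ∀ t, 0 ≤ t → V t ≤ ε → ‖η t - ηq‖ ≤ δ := by
    intro t ht hVt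
    have h1 := hlow (hmem t ht)
    have h2 : ‖η t - ηq‖^2 ≤ δ^2 := by
      rw [hεdef] at hVt
      have : m₀ * ‖η t - ηq‖^2/2 ≤ m₀ * δ^2/2 := le_trans h1 hVt
      nlinarith
    calc ‖η t - ηq‖ = Real.sqrt (‖η t - ηq‖^2) := (Real.sqrt_sq (norm_nonneg _)).symm
      _ ≤ Real.sqrt (δ^2) := Real.sqrt_le_sqrt h2
      _ = δ := Real.sqrt_sq hδpos.le
  set T : ℝ := max 0 (Real.log (V 0 / ε) / (2*m₀)) with hTdef
  have hT0 : 0 ≤ T := le_max_left _ _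
  have hVT : V T ≤ ε := by
    have h1 := hdecay T hT0
    have h2 : Real.log (V 0/ε) ≤ 2*m₀*T := by
      have h3 : Real.log (V 0/ε) / (2*m₀) ≤ T := le_max_right _ _
      calc Real.log (V 0/ε) = (Real.log (V 0/ε)/(2*m₀))*(2*m₀) := by field_simp
        _ ≤ T*(2*m₀) := mul_le_mul_of_nonneg_right h3 (by linarith)
        _ = 2*m₀*T := by ring
    have h3 : V 0 / ε ≤ Real.exp (2*m₀*T) := by
      calc V 0/ε = Real.exp (Real.log (V 0/ε)) :=
            (Real.exp_log (div_pos hV0 hεpos)).symm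
        _ ≤ Real.exp (2*m₀*T) := Real.exp_le_exp.2 h2
    have h4 : V 0 ≤ ε * Real.exp (2*m₀*T) := by
      have h5 := mul_le_mul_of_nonneg_left h3 hεpos.le
      have h6 : ε * (V 0/ε) = V 0 := by field_simp
      rwa [h6] at h5
    nlinarith [Real.exp_pos (2*m₀*T), hVnn T hT0]
  have hVle : ∀ t, T ≤ t → V t ≤ ε :=
    fun t ht => le_trans (hVanti (Set.mem_Ici.2 hT0) (Set.mem_Ici.2 (le_trans hT0 ht)) ht) hVT
  have hballT : ∀ t, T ≤ t → ‖η t - ηq‖ ≤ δ :=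
    fun t ht => hballmem t (le_trans hT0 ht) (hVle t ht)
  -- positivity of V for all times
  have hVpos : ∀ t, 0 ≤ t → 0 < V t := by
    by_contra hcon
    push_neg at hcon
    obtain ⟨t₂, ht₂, hVt₂le⟩ := hcon
    have hVt₂ : V t₂ = 0 := le_antisymm hVt₂le (hVnn t₂ ht₂)
    set S : Set ℝ := {t | 0 ≤ t ∧ V t = 0} with hSdef
    have hSne : S.Nonempty := ⟨t₂, ht₂, hVt₂⟩
    have hSbdd : BddBelow S := ⟨0, fun t ht => ht.1⟩
    have hSclosed : IsClosed S := by
      have h1 : S = Set.Ici 0 ∩ V ⁻¹' {0} := by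
        ext t; simp [hSdef, Set.mem_Ici]
      rw [h1]
      exact (hVcont (subset_refl _)).preimage_isClosed_of_isClosed isClosed_Ici
        isClosed_singleton
    set τ : ℝ := sInf S with hτdef
    have hτS : τ ∈ S := hSclosed.csInf_mem hSne hSbdd
    have hτ0 : 0 ≤ τ := hτS.1
    have hVτ : V τ = 0 := hτS.2
    have hτpos : 0 < τ := by
      rcases eq_or_lt_of_le hτ0 with h | h
      · exfalso; rw [← h] at hVτ; exact absurd hVτ (ne_of_gt hV0)
      · exact h
    have hbefore : ∀ t, 0 ≤ t → t < τ → 0 < V t := by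
      intro t h0 hlt
      rcases lt_or_eq_of_le (hVnn t h0) with h | h
      · exact h
      · exact absurd (csInf_le hSbdd ⟨h0, h.symm⟩) (not_le.2 hlt)
    have hcontτ : ContinuousAt V τ := (hVd τ hτ0).continuousAt
    have hev : ∀ᶠ t in nhds τ, V t < ε := by
      have h0 : Set.Iio ε ∈ nhds (V τ) := by rw [hVτ]; exact Iio_mem_nhds hεpos
      exact hcontτ h0
    have hev2 : ∀ᶠ t in nhds τ, t ∈ Set.Ioo (τ/2) (τ+1) :=
      Ioo_mem_nhds (by linarith) (by linarith)
    have hnb : (nhdsWithin τ (Set.Iio τ)).NeBot := by infer_instance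
    obtain ⟨t₁, ⟨hVt₁, ht₁mem⟩, ht₁lt⟩ :=
      (((hev.and hev2).filter_mono nhdsWithin_le_nhds).and (eventually_mem_nhdsWithin (a := τ) (s := Set.Iio τ))).exists
    have ht₁τ : t₁ < τ := Set.mem_Iio.1 ht₁lt
    have ht₁0 : 0 ≤ t₁ := by
      have := ht₁mem.1; linarith
    have hVt₁pos : 0 < V t₁ := hbefore t₁ ht₁0 ht₁τ
    have hsmall : ∀ t, t₁ ≤ t → t ≤ τ → ‖η t - ηq‖ ≤ δ := by
      intro t h1 h2
      have h3 : V t ≤ V t₁ := hVanti (Set.mem_Ici.2 ht₁0) (Set.mem_Ici.2 (le_trans ht₁0 h1)) h1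
      exact hballmem t (le_trans ht₁0 h1) (le_trans h3 hVt₁.le)
    have hmono : MonotoneOn (fun u => V u * Real.exp (2*L*u)) (Set.Icc t₁ τ) := by
      apply hMON L _ (convex_Icc _ _) (fun t ht => le_trans ht₁0 ht.1)
      intro t ht
      rw [interior_Icc] at ht
      exact hup (hmem t (le_trans ht₁0 ht.1.le)) (hsmall t ht.1.le ht.2.le)
    have h5 := hmono (Set.mem_Icc.2 ⟨le_rfl, ht₁τ.le⟩) (Set.mem_Icc.2 ⟨ht₁τ.le, le_rfl⟩) ht₁τ.le
    have h6 : V τ * Real.exp (2*L*τ) = 0 := by rw [hVτ]; ring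
    have h5' : V t₁ * Real.exp (2*L*t₁) ≤ V τ * Real.exp (2*L*τ) := h5
    nlinarith [mul_pos hVt₁pos (Real.exp_pos (2*L*t₁)), h5', h6]
  have hVTpos : 0 < V T := hVpos T hT0
  -- final bounds
  refine ⟨m, L, V T * Real.exp (2*L*T), V T * Real.exp (2*m*T), T, hm1, hmL,
    mul_pos hVTpos (Real.exp_pos _), mul_pos hVTpos (Real.exp_pos _), hT0, ?_⟩
  intro t ht
  have ht0 : 0 ≤ t := le_trans hT0 ht
  have hIciT : Set.Ici T ⊆ Set.Ici 0 := fun u hu => le_trans hT0 hu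
  have hmonoL : MonotoneOn (fun u => V u * Real.exp (2*L*u)) (Set.Ici T) := by
    apply hMON L _ (convex_Ici T) hIciT
    intro u hu
    rw [interior_Ici] at hu
    exact hup (hmem u (le_trans hT0 hu.le)) (hballT u hu.le)
  have hantim : AntitoneOn (fun u => V u * Real.exp (2*m*u)) (Set.Ici T) := by
    apply hANT m _ (convex_Ici T) hIciT
    intro u hu
    rw [interior_Ici] at hu
    have h1 := hplm (hmem u (le_trans hT0 hu.le)) (hballT u hu.le)
    have h2 : V u * (2*m) ≤ ‖gradL q (η u)‖^2 := (le_div_iff₀ (by positivity)).1 h1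
    linarith
  refine ⟨?_, ?_, ?_⟩
  · -- lower bound
    have h1 : V T * Real.exp (2*L*T) ≤ V t * Real.exp (2*L*t) :=
      hmonoL (Set.self_mem_Ici) (Set.mem_Ici.2 ht) ht
    have h2 := mul_le_mul_of_nonneg_right h1 (Real.exp_pos (-2*L*t)).le
    have h3 : V t * Real.exp (2*L*t) * Real.exp (-2*L*t) = V t := by
      rw [mul_assoc, ← Real.exp_add, show 2*L*t + (-2*L*t) = 0 by ring, Real.exp_zero, mul_one]
    rw [h3] at h2
    exact h2
  · -- upper bound
    have h1 : V t * Real.exp (2*m*t) ≤ V T * Real.exp (2*m*T) :=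
      hantim (Set.self_mem_Ici) (Set.mem_Ici.2 ht) ht
    have h2 := mul_le_mul_of_nonneg_right h1 (Real.exp_pos (-2*m*t)).le
    have h3 : V t * Real.exp (2*m*t) * Real.exp (-2*m*t) = V t := by
      rw [mul_assoc, ← Real.exp_add, show 2*m*t + (-2*m*t) = 0 by ring, Real.exp_zero, mul_one]
    rw [h3] at h2
    exact h2
  · -- comparison of rates
    apply mul_le_mul_of_nonneg_left _ (mul_pos hVTpos (Real.exp_pos _)).le
    apply Real.exp_le_exp.2
    nlinarith [mul_nonneg ht0 (le_of_lt (sub_pos.2 hm1))]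

end
end

section
/- Let q, p₀ ∈ S_n with p₀ ≠ q, and define η_ng(t) = η_q + e^{−t}·(η_{p₀} − η_q) for t ≥ 0 (the solution of the natural gradient flow η' = −(η − η_q) with η(0) = η_{p₀}). Then η_ng(t) ∈ Δ_n for all t ≥ 0, and there exist constants c₁, c₂ > 0 such that c₁·e^{−2t} ≤ L_q(η_ng(t)) ≤ c₂·e^{−2t} for all t ≥ 0; i.e., L_q(η_ng(t)) converges to zero exponentially with rate exactly 2. -/
open Filter

noncomputable section

lemma log_upper' (x : ℝ) (hx : -1 < x) : x - Real.log (1+x) ≤ x^2/(1+x) := by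
  have h1 : (0:ℝ) < 1 + x := by linarith
  have h2 := Real.log_le_sub_one_of_pos (inv_pos.2 h1)
  rw [Real.log_inv] at h2
  have h3 : x + (1+x)⁻¹ - 1 = x^2/(1+x) := by field_simp; ring
  linarith

-- x ≥ 0 : x²/(2(1+x)) ≤ x - log(1+x)
lemma log_lower_pos' (x : ℝ) (hx : 0 ≤ x) : x^2/(2*(1+x)) ≤ x - Real.log (1+x) := by
  set G : ℝ → ℝ := fun y => y - Real.log (1+y) - y^2/(2*(1+y)) with hG
  have key : ∀ y ∈ Set.Ici (0:ℝ), HasDerivAt G (y^2/(2*(1+y)^2)) y := by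
    intro y hy
    simp only [Set.mem_Ici] at hy
    have h1 : (0:ℝ) < 1 + y := by linarith
    have d1 : HasDerivAt (fun y : ℝ => 1 + y) 1 y := by
      simpa using (hasDerivAt_id y).const_add 1
    have d2 : HasDerivAt (fun y : ℝ => Real.log (1+y)) (1/(1+y)) y := by
      simpa using d1.log h1.ne'
    have d3 : HasDerivAt (fun y : ℝ => y^2/(2*(1+y)))
        ((2*y*(2*(1+y)) - y^2*2)/(2*(1+y))^2) y := by
      exact (hasDerivAt_pow 2 y |>.congr_deriv (by ring)).div ((d1.const_mul 2).congr_deriv (by ring)) (by positivity)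
    have := ((hasDerivAt_id y).sub d2).sub d3
    refine this.congr_deriv ?_
    field_simp
    ring
  have mono : MonotoneOn G (Set.Ici 0) := by
    apply monotoneOn_of_deriv_nonneg (convex_Ici 0)
    · exact fun y hy => ((key y hy).continuousAt).continuousWithinAt
    · intro y hy
      rw [interior_Ici] at hy
      exact ((key y (Set.mem_Ici.2 (le_of_lt (Set.mem_Ioi.1 hy)))).differentiableAt).differentiableWithinAt
    · intro y hy
      rw [interior_Ici] at hy
      rw [(key y (Set.mem_Ici.2 (Set.mem_Ioi.1 hy).le)).deriv]
      positivity
  have h0 : G 0 = 0 := by simp [hG]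
  have := mono (Set.mem_Ici.2 le_rfl) (Set.mem_Ici.2 hx) hx
  rw [h0] at this
  simp only [hG] at this
  linarith

-- -1 < x ≤ 0 : x²/2 ≤ x - log(1+x)
lemma log_lower_neg' (x : ℝ) (hx : -1 < x) (hx0 : x ≤ 0) : x^2/2 ≤ x - Real.log (1+x) := by
  set H : ℝ → ℝ := fun y => y - Real.log (1+y) - y^2/2 with hH
  have key : ∀ y ∈ Set.Ioc (-1:ℝ) 0, HasDerivAt H (-(y^2/(1+y))) y := by
    intro y hy
    have h1 : (0:ℝ) < 1 + y := by linarith [hy.1]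
    have d1 : HasDerivAt (fun y : ℝ => 1 + y) 1 y := by
      simpa using (hasDerivAt_id y).const_add 1
    have d2 : HasDerivAt (fun y : ℝ => Real.log (1+y)) (1/(1+y)) y := by
      simpa using d1.log h1.ne'
    have d3 : HasDerivAt (fun y : ℝ => y^2/2) y y := by
      simpa using (hasDerivAt_pow 2 y).div_const 2
    have := ((hasDerivAt_id y).sub d2).sub d3
    refine this.congr_deriv ?_
    field_simp
    ring
  have anti : AntitoneOn H (Set.Ioc (-1) 0) := by
    apply antitoneOn_of_deriv_nonpos (convex_Ioc (-1) 0)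
    · exact fun y hy => ((key y hy).continuousAt).continuousWithinAt
    · intro y hy
      rw [interior_Ioc] at hy
      exact ((key y (Set.Ioo_subset_Ioc_self hy)).differentiableAt).differentiableWithinAt
    · intro y hy
      rw [interior_Ioc] at hy
      rw [(key y (Set.Ioo_subset_Ioc_self hy)).deriv]
      have h1 : (0:ℝ) < 1 + y := by linarith [hy.1]
      have : 0 ≤ y^2/(1+y) := by positivity
      linarith
  have h0 : H 0 = 0 := by simp [hH]
  have := anti (Set.mem_Ioc.2 ⟨hx, hx0⟩) (Set.mem_Ioc.2 ⟨by norm_num, le_rfl⟩) hx0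
  rw [h0] at this
  simp only [hH] at this
  linarith

-- the mixture path is affine in the original coordinates
lemma mix_path {n : ℕ} (q p₀ : Fin (n+1) → ℝ) (hq : ∑ i, q i = 1) (hp : ∑ i, p₀ i = 1)
    (s : ℝ) :
    mixDist (etaCoord q + s • (etaCoord p₀ - etaCoord q)) =
      fun i => q i + s * (p₀ i - q i) := by
  have happ : ∀ i : Fin n, (etaCoord q + s • (etaCoord p₀ - etaCoord q)) i
      = q i.castSucc + s * (p₀ i.castSucc - q i.castSucc) := by
    intro i
    simp [etaCoord, PiLp.add_apply, PiLp.smul_apply, PiLp.sub_apply, smul_eq_mul]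
  have e1 : ∑ i : Fin n, q i.castSucc = 1 - q (Fin.last n) := by
    have := Fin.sum_univ_castSucc (fun i => q i)
    rw [hq] at this; linarith
  have e2 : ∑ i : Fin n, p₀ i.castSucc = 1 - p₀ (Fin.last n) := by
    have := Fin.sum_univ_castSucc (fun i => p₀ i)
    rw [hp] at this; linarith
  funext i
  induction i using Fin.lastCases with
  | last =>
      show Fin.snoc _ _ _ = _
      rw [Fin.snoc_last]
      have hs : ∑ i : Fin n, (etaCoord q + s • (etaCoord p₀ - etaCoord q)) i
          = ∑ i : Fin n, (q i.castSucc + s * (p₀ i.castSucc - q i.castSucc)) :=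
        Finset.sum_congr rfl fun i _ => happ i
      rw [hs, Finset.sum_add_distrib, ← Finset.mul_sum, Finset.sum_sub_distrib, e1, e2]
      ring
  | cast i =>
      show Fin.snoc _ _ _ = _
      rw [Fin.snoc_castSucc]
      exact happ i

/-- The natural gradient flow trajectory stays in `Δ_n` and converges with
rate exactly 2. -/
theorem stmt_8 {n : ℕ} (q p₀ : Fin (n+1) → ℝ)
    (hq : q ∈ simplex n) (hp₀ : p₀ ∈ simplex n) (hne : p₀ ≠ q) :
    (∀ t ≥ (0 : ℝ),
      etaCoord q + Real.exp (-t) • (etaCoord p₀ - etaCoord q) ∈ Δset n) ∧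
    ∃ c₁ c₂ : ℝ, 0 < c₁ ∧ 0 < c₂ ∧
      ∀ t ≥ (0 : ℝ),
        c₁ * Real.exp (-2 * t) ≤
          Leta q (etaCoord q + Real.exp (-t) • (etaCoord p₀ - etaCoord q)) ∧
        Leta q (etaCoord q + Real.exp (-t) • (etaCoord p₀ - etaCoord q)) ≤
          c₂ * Real.exp (-2 * t) := by
  obtain ⟨hqpos, hqsum⟩ := hq
  obtain ⟨hppos, hpsum⟩ := hp₀
  set a : Fin (n+1) → ℝ := fun i => (p₀ i - q i) / q i with ha_def
  have ha : ∀ i, q i * a i = p₀ i - q i := by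
    intro i
    rw [ha_def, mul_comm, div_mul_cancel₀ _ (hqpos i).ne']
  have husum : ∑ i, (p₀ i - q i) = 0 := by
    rw [Finset.sum_sub_distrib, hpsum, hqsum]; ring
  have hprod : ∀ (s : ℝ) (i : Fin (n+1)), q i * (1 + s * a i) = q i + s * (p₀ i - q i) := by
    intro s i
    calc q i * (1 + s * a i) = q i + s * (q i * a i) := by ring
      _ = q i + s * (p₀ i - q i) := by rw [ha i]
  have hpos : ∀ (s : ℝ), 0 < s → s ≤ 1 → ∀ i, 0 < q i + s * (p₀ i - q i) := by
    intro s hs0 hs1 i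
    nlinarith [mul_nonneg (by linarith : (0:ℝ) ≤ 1 - s) (hqpos i).le, mul_pos hs0 (hppos i)]
  have h1sa : ∀ (s : ℝ), 0 < s → s ≤ 1 → ∀ i, 0 < 1 + s * a i := by
    intro s hs0 hs1 i
    have h := hpos s hs0 hs1 i
    rw [← hprod s i] at h
    nlinarith [hqpos i]
  have h1a : ∀ i, 0 < 1 + a i := by
    intro i; have := h1sa 1 one_pos le_rfl i; simpa using this
  have hKL : ∀ (s : ℝ), 0 < s → s ≤ 1 →
      KL q (fun i => q i + s * (p₀ i - q i)) =
        ∑ i, q i * (s * a i - Real.log (1 + s * a i)) := by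
    intro s hs0 hs1
    unfold KL
    have key : ∀ i : Fin (n+1), q i * Real.log (q i / (q i + s * (p₀ i - q i)))
        = q i * (s * a i - Real.log (1 + s * a i)) - s * (p₀ i - q i) := by
      intro i
      have hx := h1sa s hs0 hs1 i
      have hdiv : q i / (q i + s * (p₀ i - q i)) = (1 + s * a i)⁻¹ := by
        rw [← hprod s i, ← div_div, div_self (hqpos i).ne', one_div]
      rw [hdiv, Real.log_inv, ← ha i]
      ring
    rw [Finset.sum_congr rfl fun i _ => key i, Finset.sum_sub_distrib,
      ← Finset.mul_sum, husum, mul_zero, sub_zero]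
  set c₁ : ℝ := ∑ i, q i * (a i ^ 2 / (2 * max 1 (1 + a i))) with hc₁
  set c₂ : ℝ := ∑ i, q i * (a i ^ 2 / min 1 (1 + a i)) with hc₂
  obtain ⟨i₀, hi₀⟩ : ∃ i, p₀ i ≠ q i := Function.ne_iff.mp hne
  have hai₀ : a i₀ ≠ 0 := by
    rw [ha_def]
    exact div_ne_zero (sub_ne_zero_of_ne hi₀) (hqpos i₀).ne'
  have hMpos : ∀ i, (0:ℝ) < max 1 (1 + a i) := fun i => lt_max_iff.mpr (Or.inl one_pos)
  have hmpos : ∀ i, (0:ℝ) < min 1 (1 + a i) := fun i => lt_min one_pos (h1a i)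
  have hc₁pos : 0 < c₁ := by
    apply Finset.sum_pos'
      (fun i _ => mul_nonneg (hqpos i).le
        (div_nonneg (sq_nonneg _) (by linarith [hMpos i])))
    exact ⟨i₀, Finset.mem_univ _,
      mul_pos (hqpos i₀) (div_pos (sq_pos_of_ne_zero hai₀) (by linarith [hMpos i₀]))⟩
  have hc₂pos : 0 < c₂ := by
    apply Finset.sum_pos'
      (fun i _ => mul_nonneg (hqpos i).le (div_nonneg (sq_nonneg _) (hmpos i).le))
    exact ⟨i₀, Finset.mem_univ _,
      mul_pos (hqpos i₀) (div_pos (sq_pos_of_ne_zero hai₀) (hmpos i₀))⟩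
  have hterm : ∀ (s : ℝ), 0 < s → s ≤ 1 → ∀ i : Fin (n+1),
      s^2 * (a i ^ 2 / (2 * max 1 (1 + a i))) ≤ s * a i - Real.log (1 + s * a i) ∧
      s * a i - Real.log (1 + s * a i) ≤ s^2 * (a i ^ 2 / min 1 (1 + a i)) := by
    intro s hs0 hs1 i
    have hx := h1sa s hs0 hs1 i
    have hxgt : -1 < s * a i := by linarith
    constructor
    · rcases le_or_gt 0 (a i) with hai | hai
      · have hxnn : 0 ≤ s * a i := mul_nonneg hs0.le hai
        have hb := log_lower_pos' (s * a i) hxnn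
        have hle : 2 * (1 + s * a i) ≤ 2 * max 1 (1 + a i) := by
          have h1 : s * a i ≤ a i := by nlinarith
          have h2 := le_max_right (1:ℝ) (1 + a i)
          linarith
        have h3 : (s * a i)^2 / (2 * max 1 (1 + a i)) ≤ (s * a i)^2 / (2 * (1 + s * a i)) :=
          div_le_div_of_nonneg_left (sq_nonneg _) (by linarith) hle
        have h4 : s^2 * (a i ^ 2 / (2 * max 1 (1 + a i)))
            = (s * a i)^2 / (2 * max 1 (1 + a i)) := by ring
        linarith
      · have hxle : s * a i ≤ 0 := mul_nonpos_of_nonneg_of_nonpos hs0.le hai.le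
        have hb := log_lower_neg' (s * a i) hxgt hxle
        have h3 : (s * a i)^2 / (2 * max 1 (1 + a i)) ≤ (s * a i)^2 / 2 := by
          apply div_le_div_of_nonneg_left (sq_nonneg _) two_pos
          have := le_max_left (1:ℝ) (1 + a i)
          linarith
        have h4 : s^2 * (a i ^ 2 / (2 * max 1 (1 + a i)))
            = (s * a i)^2 / (2 * max 1 (1 + a i)) := by ring
        linarith
    · have hb := log_upper' (s * a i) hxgt
      have hge : min 1 (1 + a i) ≤ 1 + s * a i := by
        rcases le_or_gt 0 (a i) with hai | hai
        · have h1 : (0:ℝ) ≤ s * a i := mul_nonneg hs0.le hai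
          have h2 := min_le_left (1:ℝ) (1 + a i)
          linarith
        · have h1 : a i ≤ s * a i := by nlinarith
          have h2 := min_le_right (1:ℝ) (1 + a i)
          linarith
      have h3 : (s * a i)^2 / (1 + s * a i) ≤ (s * a i)^2 / min 1 (1 + a i) :=
        div_le_div_of_nonneg_left (sq_nonneg _) (hmpos i) hge
      have h4 : (s * a i)^2 / min 1 (1 + a i) = s^2 * (a i ^ 2 / min 1 (1 + a i)) := by ring
      linarith
  constructor
  · intro t ht
    set s : ℝ := Real.exp (-t) with hs
    have hs0 : 0 < s := Real.exp_pos _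
    have hs1 : s ≤ 1 := Real.exp_le_one_iff.mpr (by linarith)
    constructor
    · intro i
      have happ : (etaCoord q + s • (etaCoord p₀ - etaCoord q)) i
          = q i.castSucc + s * (p₀ i.castSucc - q i.castSucc) := by
        simp [etaCoord, PiLp.add_apply, PiLp.smul_apply, PiLp.sub_apply, smul_eq_mul]
      rw [happ]
      exact hpos s hs0 hs1 i.castSucc
    · have e1 : ∑ i : Fin n, q i.castSucc = 1 - q (Fin.last n) := by
        have := Fin.sum_univ_castSucc (fun i => q i)
        rw [hqsum] at this; linarith
      have e2 : ∑ i : Fin n, p₀ i.castSucc = 1 - p₀ (Fin.last n) := by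
        have := Fin.sum_univ_castSucc (fun i => p₀ i)
        rw [hpsum] at this; linarith
      have hsum_eq : ∑ i : Fin n, (etaCoord q + s • (etaCoord p₀ - etaCoord q)) i
          = 1 - (q (Fin.last n) + s * (p₀ (Fin.last n) - q (Fin.last n))) := by
        have hs' : ∑ i : Fin n, (etaCoord q + s • (etaCoord p₀ - etaCoord q)) i
            = ∑ i : Fin n, (q i.castSucc + s * (p₀ i.castSucc - q i.castSucc)) := by
          apply Finset.sum_congr rfl
          intro i _
          simp [etaCoord, PiLp.add_apply, PiLp.smul_apply, PiLp.sub_apply, smul_eq_mul]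
        rw [hs', Finset.sum_add_distrib, ← Finset.mul_sum, Finset.sum_sub_distrib, e1, e2]
        ring
      show ∑ i : Fin n, (etaCoord q + s • (etaCoord p₀ - etaCoord q)) i < 1
      rw [hsum_eq]
      have := hpos s hs0 hs1 (Fin.last n)
      linarith
  · refine ⟨c₁, c₂, hc₁pos, hc₂pos, ?_⟩
    intro t ht
    set s : ℝ := Real.exp (-t) with hs
    have hs0 : 0 < s := Real.exp_pos _
    have hs1 : s ≤ 1 := Real.exp_le_one_iff.mpr (by linarith)
    have hssq : Real.exp (-2 * t) = s^2 := by
      rw [hs, sq, ← Real.exp_add]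
      congr 1
      ring
    have hL : Leta q (etaCoord q + s • (etaCoord p₀ - etaCoord q))
        = ∑ i, q i * (s * a i - Real.log (1 + s * a i)) := by
      rw [Leta, mix_path q p₀ hqsum hpsum s, hKL s hs0 hs1]
    have heq1 : c₁ * s^2 = ∑ i, q i * (s^2 * (a i ^ 2 / (2 * max 1 (1 + a i)))) := by
      rw [hc₁, Finset.sum_mul]
      exact Finset.sum_congr rfl fun i _ => by ring
    have heq2 : c₂ * s^2 = ∑ i, q i * (s^2 * (a i ^ 2 / min 1 (1 + a i))) := by
      rw [hc₂, Finset.sum_mul]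
      exact Finset.sum_congr rfl fun i _ => by ring
    have hle1 : ∑ i, q i * (s^2 * (a i ^ 2 / (2 * max 1 (1 + a i))))
        ≤ ∑ i, q i * (s * a i - Real.log (1 + s * a i)) :=
      Finset.sum_le_sum fun i _ =>
        mul_le_mul_of_nonneg_left (hterm s hs0 hs1 i).1 (hqpos i).le
    have hle2 : ∑ i, q i * (s * a i - Real.log (1 + s * a i))
        ≤ ∑ i, q i * (s^2 * (a i ^ 2 / min 1 (1 + a i))) :=
      Finset.sum_le_sum fun i _ =>
        mul_le_mul_of_nonneg_left (hterm s hs0 hs1 i).2 (hqpos i).le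
    rw [hL, hssq, heq1, heq2]
    exact ⟨hle1, hle2⟩
end
end

section
/- For all p, q ∈ S_n with coordinates θ_p, θ_q, η_p, η_q, the two Bregman divergences agree with the Kullback–Leibler divergence: ψ(θ_p) − ψ(θ_q) − ⟨∇ψ(θ_q), θ_p − θ_q⟩ = φ(η_q) − φ(η_p) − ⟨∇φ(η_p), η_q − η_p⟩ = D(q‖p), where ⟨·,·⟩ is the Euclidean inner product on ℝⁿ. -/
open Filter

noncomputable section

open Real

variable {n : ℕ}

lemma hasFDerivAt_coord (i : Fin n) (θ : E n) :
    HasFDerivAt (fun θ : E n => θ i) (EuclideanSpace.proj i : E n →L[ℝ] ℝ) θ :=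
  (EuclideanSpace.proj i : E n →L[ℝ] ℝ).hasFDerivAt

lemma proj_apply' (i : Fin n) (x : E n) :
    (EuclideanSpace.proj i : E n →L[ℝ] ℝ) x = x i := rfl

lemma inner_gradient_eq {f : E n → ℝ} {x : E n} {L : E n →L[ℝ] ℝ}
    (h : HasFDerivAt f L x) (v : E n) : (inner ℝ (gradient f x) v : ℝ) = L v := by
  rw [gradient, h.fderiv]
  exact InnerProductSpace.toDual_symm_apply

lemma hasFDerivAt_psi (θ : E n) :
    HasFDerivAt psi ((1 + ∑ i, exp (θ i))⁻¹ •
      ∑ i, exp (θ i) • (EuclideanSpace.proj i : E n →L[ℝ] ℝ)) θ := by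
  have hS : (0:ℝ) < 1 + ∑ i, exp (θ i) := by positivity
  have h1 : HasFDerivAt (fun θ : E n => 1 + ∑ i, exp (θ i))
      (∑ i, exp (θ i) • (EuclideanSpace.proj i : E n →L[ℝ] ℝ)) θ := by
    exact (HasFDerivAt.fun_sum fun i _ =>
      (Real.hasDerivAt_exp (θ i)).comp_hasFDerivAt θ (hasFDerivAt_coord i θ)).const_add 1
  exact (Real.hasDerivAt_log hS.ne').comp_hasFDerivAt θ h1

lemma hasFDerivAt_phi {η : E n} (hi : ∀ i, 0 < η i) (hs : ∑ i, η i < 1) :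
    HasFDerivAt phi
      ((∑ i, (log (η i) + 1) • (EuclideanSpace.proj i : E n →L[ℝ] ℝ))
        + (log (1 - ∑ i, η i) + 1) • (-∑ i, (EuclideanSpace.proj i : E n →L[ℝ] ℝ))) η := by
  have h1 : HasFDerivAt (fun η : E n => ∑ i, η i * log (η i))
      (∑ i, (log (η i) + 1) • (EuclideanSpace.proj i : E n →L[ℝ] ℝ)) η :=
    HasFDerivAt.fun_sum fun i _ =>
      by have := (Real.hasDerivAt_mul_log (hi i).ne').comp_hasFDerivAt η (hasFDerivAt_coord i η); exact this
  have h2 : HasFDerivAt (fun η : E n => 1 - ∑ i, η i)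
      (-∑ i, (EuclideanSpace.proj i : E n →L[ℝ] ℝ)) η :=
    (HasFDerivAt.fun_sum fun i _ => (hasFDerivAt_coord i η)).const_sub 1
  have h3 := (Real.hasDerivAt_mul_log (by linarith : (1 - ∑ i, η i) ≠ 0)).comp_hasFDerivAt η h2
  exact h1.add h3


/-- Both Bregman divergences agree with the KL divergence. -/
theorem stmt_13 {n : ℕ} (p q : Fin (n+1) → ℝ)
    (hp : p ∈ simplex n) (hq : q ∈ simplex n) :
    psi (thetaCoord p) - psi (thetaCoord q) -
        (inner ℝ (gradient psi (thetaCoord q)) (thetaCoord p - thetaCoord q) : ℝ) = KL q p ∧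
    phi (etaCoord q) - phi (etaCoord p) -
        (inner ℝ (gradient phi (etaCoord p)) (etaCoord q - etaCoord p) : ℝ) = KL q p := by
  obtain ⟨hp1, hp2⟩ := hp
  obtain ⟨hq1, hq2⟩ := hq
  have hPl0 : 0 < p (Fin.last n) := hp1 _
  have hQl0 : 0 < q (Fin.last n) := hq1 _
  have hsp : ∑ i : Fin n, p i.castSucc = 1 - p (Fin.last n) := by
    rw [Fin.sum_univ_castSucc] at hp2; linarith
  have hsq : ∑ i : Fin n, q i.castSucc = 1 - q (Fin.last n) := by
    rw [Fin.sum_univ_castSucc] at hq2; linarith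
  -- abbreviations for the key sums
  set A : ℝ := ∑ i : Fin n, q i.castSucc * Real.log (p i.castSucc) with hA
  set Bq : ℝ := ∑ i : Fin n, q i.castSucc * Real.log (q i.castSucc) with hBq
  set Bp : ℝ := ∑ i : Fin n, p i.castSucc * Real.log (p i.castSucc) with hBp
  -- KL expansion
  have hKL : KL q p = (Bq - A) + q (Fin.last n) *
      (Real.log (q (Fin.last n)) - Real.log (p (Fin.last n))) := by
    rw [KL, Fin.sum_univ_castSucc, Real.log_div hQl0.ne' hPl0.ne']
    rw [show (∑ i : Fin n, q i.castSucc * Real.log (q i.castSucc / p i.castSucc))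
        = ∑ i : Fin n, (q i.castSucc * Real.log (q i.castSucc)
          - q i.castSucc * Real.log (p i.castSucc)) from
      Finset.sum_congr rfl fun i _ => by
        rw [Real.log_div (hq1 _).ne' (hp1 _).ne']; ring]
    rw [Finset.sum_sub_distrib]
  constructor
  · -- psi part
    have hexpq : ∀ i : Fin n, Real.exp (thetaCoord q i) = q i.castSucc / q (Fin.last n) :=
      fun i => Real.exp_log (div_pos (hq1 _) hQl0)
    have hexpp : ∀ i : Fin n, Real.exp (thetaCoord p i) = p i.castSucc / p (Fin.last n) :=
      fun i => Real.exp_log (div_pos (hp1 _) hPl0)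
    have h1q : 1 + ∑ i : Fin n, Real.exp (thetaCoord q i) = (q (Fin.last n))⁻¹ := by
      rw [Finset.sum_congr rfl fun i _ => hexpq i, ← Finset.sum_div, hsq]
      field_simp
      ring
    have h1p : 1 + ∑ i : Fin n, Real.exp (thetaCoord p i) = (p (Fin.last n))⁻¹ := by
      rw [Finset.sum_congr rfl fun i _ => hexpp i, ← Finset.sum_div, hsp]
      field_simp
      ring
    have hpsiq : psi (thetaCoord q) = - Real.log (q (Fin.last n)) := by
      rw [psi, h1q, Real.log_inv]
    have hpsip : psi (thetaCoord p) = - Real.log (p (Fin.last n)) := by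
      rw [psi, h1p, Real.log_inv]
    have hinner : (inner ℝ (gradient psi (thetaCoord q)) (thetaCoord p - thetaCoord q) : ℝ)
        = ∑ i : Fin n, q i.castSucc * (thetaCoord p i - thetaCoord q i) := by
      rw [inner_gradient_eq (hasFDerivAt_psi (thetaCoord q)) _]
      simp only [ContinuousLinearMap.smul_apply, ContinuousLinearMap.coe_sum',
        Finset.sum_apply, ContinuousLinearMap.coe_smul', Pi.smul_apply,
        proj_apply', smul_eq_mul]
      rw [h1q, inv_inv, Finset.mul_sum]
      refine Finset.sum_congr rfl fun i _ => ?_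
      rw [hexpq i]
      have hv : (thetaCoord p - thetaCoord q) i = thetaCoord p i - thetaCoord q i := rfl
      rw [hv]
      field_simp
    have e1 : ∑ i : Fin n, q i.castSucc * (thetaCoord p i - thetaCoord q i)
        = A - Bq + (1 - q (Fin.last n)) *
            (Real.log (q (Fin.last n)) - Real.log (p (Fin.last n))) := by
      rw [show (∑ i : Fin n, q i.castSucc * (thetaCoord p i - thetaCoord q i))
          = ∑ i : Fin n, (q i.castSucc * Real.log (p i.castSucc)
              - q i.castSucc * Real.log (q i.castSucc)
              + q i.castSucc * (Real.log (q (Fin.last n)) - Real.log (p (Fin.last n)))) from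
        Finset.sum_congr rfl fun i _ => by
          simp only [thetaCoord]
          rw [Real.log_div (hp1 _).ne' hPl0.ne', Real.log_div (hq1 _).ne' hQl0.ne']
          ring]
      rw [Finset.sum_add_distrib, Finset.sum_sub_distrib, ← Finset.sum_mul, hsq]
    rw [hpsip, hpsiq, hinner, e1, hKL]; ring
  · -- phi part
    have hi : ∀ i, 0 < etaCoord p i := fun i => hp1 _
    have hse : ∑ i : Fin n, etaCoord p i = 1 - p (Fin.last n) := hsp
    have hs' : ∑ i : Fin n, etaCoord p i < 1 := by rw [hse]; linarith
    have hphiq : phi (etaCoord q) = Bq + q (Fin.last n) * Real.log (q (Fin.last n)) := by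
      rw [phi]
      have : ∑ i : Fin n, etaCoord q i = 1 - q (Fin.last n) := hsq
      rw [show (∑ i : Fin n, etaCoord q i * Real.log (etaCoord q i)) = Bq from rfl, this]
      ring_nf
    have hphip : phi (etaCoord p) = Bp + p (Fin.last n) * Real.log (p (Fin.last n)) := by
      rw [phi]
      rw [show (∑ i : Fin n, etaCoord p i * Real.log (etaCoord p i)) = Bp from rfl, hse]
      ring_nf
    have hinner : (inner ℝ (gradient phi (etaCoord p)) (etaCoord q - etaCoord p) : ℝ)
        = (∑ i : Fin n, (Real.log (p i.castSucc) + 1) * (q i.castSucc - p i.castSucc))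
          - (Real.log (p (Fin.last n)) + 1) * (p (Fin.last n) - q (Fin.last n)) := by
      rw [inner_gradient_eq (hasFDerivAt_phi hi hs') _]
      simp only [ContinuousLinearMap.add_apply, ContinuousLinearMap.smul_apply,
        ContinuousLinearMap.coe_sum', Finset.sum_apply, ContinuousLinearMap.coe_smul',
        Pi.smul_apply, proj_apply', ContinuousLinearMap.neg_apply,
        smul_eq_mul]
      have hv : ∀ i : Fin n, (etaCoord q - etaCoord p) i = q i.castSucc - p i.castSucc :=
        fun i => rfl
      have hsv : ∑ i : Fin n, (etaCoord q - etaCoord p) i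
          = (1 - q (Fin.last n)) - (1 - p (Fin.last n)) := by
        rw [Finset.sum_congr rfl fun i _ => hv i, Finset.sum_sub_distrib, hsq, hsp]
      rw [hse, hsv]
      rw [Finset.sum_congr rfl fun i _ => by rw [hv i]]
      have : ∀ i : Fin n, etaCoord p i = p i.castSucc := fun i => rfl
      simp only [this]
      rw [show (∑ x : Fin n, (Real.log (p x.castSucc) + 1) * (q x.castSucc - p x.castSucc))
          = ∑ x : Fin n, (Real.log (p x.castSucc) * q x.castSucc
              - Real.log (p x.castSucc) * p x.castSucc + (q x.castSucc - p x.castSucc)) from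
        Finset.sum_congr rfl fun i _ => by ring]
      ring
    have e2 : ∑ i : Fin n, (Real.log (p i.castSucc) + 1) * (q i.castSucc - p i.castSucc)
        = A - Bp + ((1 - q (Fin.last n)) - (1 - p (Fin.last n))) := by
      rw [show (∑ i : Fin n, (Real.log (p i.castSucc) + 1) * (q i.castSucc - p i.castSucc))
          = ∑ i : Fin n, (q i.castSucc * Real.log (p i.castSucc)
              - p i.castSucc * Real.log (p i.castSucc)
              + (q i.castSucc - p i.castSucc)) from
        Finset.sum_congr rfl fun i _ => by ring]
      rw [Finset.sum_add_distrib, Finset.sum_sub_distrib, Finset.sum_sub_distrib, hsq, hsp]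
    rw [hphiq, hphip, hinner, e2, hKL]; ring


end
end

section
/- Let Q be an n×n real symmetric positive definite matrix with condition number κ = λ_max(Q)/λ_min(Q), and set α = 2/(λ_min(Q) + λ_max(Q)). Let ε > 0 and let Δ : ℕ → ℝ^{n×n} be a sequence of matrices with ‖Δ(k)‖₂ < 1/κ − ε for all k ≥ 0. Let e : ℕ → ℝⁿ satisfy e(k+1) = (I − α(I + Δ(k))Q)·e(k) for all k ≥ 0, with arbitrary e(0). Then, setting ρ = 1 − εκ/(κ+1), one has 0 < ρ < 1 and ‖e(k)‖ ≤ ρᵏ·‖e(0)‖ for all k ≥ 0; in particular e(k) → 0 as k → ∞. -/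
open Filter

noncomputable section

/-! ### Auxiliary lemmas -/

lemma aux_toCLM_eigen {n : ℕ} {A : Matrix (Fin n) (Fin n) ℝ} (hA : A.IsHermitian) (i : Fin n) :
    Matrix.toEuclideanCLM (𝕜 := ℝ) A (hA.eigenvectorBasis i)
      = hA.eigenvalues i • hA.eigenvectorBasis i := by
  apply (WithLp.equiv 2 _).injective
  simp only [WithLp.equiv_apply, Matrix.ofLp_toEuclideanCLM, Matrix.toLin'_apply]
  have := hA.mulVec_eigenvectorBasis i
  ext j
  simpa using congrFun this j

lemma aux_symm {n : ℕ} {A : Matrix (Fin n) (Fin n) ℝ} (hA : A.IsHermitian) (x y : E n) :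
    inner ℝ (Matrix.toEuclideanCLM (𝕜 := ℝ) A x) y
      = (inner ℝ x (Matrix.toEuclideanCLM (𝕜 := ℝ) A y) : ℝ) := by
  have hsa : IsSelfAdjoint (Matrix.toEuclideanCLM (𝕜 := ℝ) A) :=
    IsSelfAdjoint.map hA (Matrix.toEuclideanCLM (𝕜 := ℝ))
  exact (ContinuousLinearMap.isSelfAdjoint_iff_isSymmetric.mp hsa) x y

lemma aux_repr {n : ℕ} {A : Matrix (Fin n) (Fin n) ℝ} (hA : A.IsHermitian) (x : E n) (i : Fin n) :
    hA.eigenvectorBasis.repr (Matrix.toEuclideanCLM (𝕜 := ℝ) A x) i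
      = hA.eigenvalues i * hA.eigenvectorBasis.repr x i := by
  rw [OrthonormalBasis.repr_apply_apply, OrthonormalBasis.repr_apply_apply,
    ← aux_symm hA, aux_toCLM_eigen hA i, real_inner_smul_left]

lemma aux_norm_le {n : ℕ} {A : Matrix (Fin n) (Fin n) ℝ} (hA : A.IsHermitian) {c : ℝ}
    (hc : 0 ≤ c) (h : ∀ i, |hA.eigenvalues i| ≤ c) :
    ‖Matrix.toEuclideanCLM (𝕜 := ℝ) A‖ ≤ c := by
  apply ContinuousLinearMap.opNorm_le_bound _ hc
  intro x
  set b := hA.eigenvectorBasis with hb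
  set T := Matrix.toEuclideanCLM (𝕜 := ℝ) A with hT
  have h1 : ∀ y : E n, ‖y‖ ^ 2 = ∑ i, (b.repr y i) ^ 2 := by
    intro y
    rw [← b.repr.norm_map y, EuclideanSpace.norm_eq, Real.sq_sqrt (by positivity)]
    simp [sq_abs]
  have hx : ‖T x‖ ^ 2 ≤ (c * ‖x‖) ^ 2 := by
    rw [h1, mul_pow, h1, Finset.mul_sum]
    apply Finset.sum_le_sum
    intro i _
    rw [aux_repr hA]
    have hi := h i
    have h2 := abs_nonneg (hA.eigenvalues i)
    have h3 : (hA.eigenvalues i) ^ 2 ≤ c ^ 2 := by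
      have := mul_le_mul hi hi h2 hc
      nlinarith [sq_abs (hA.eigenvalues i)]
    nlinarith [sq_nonneg (b.repr x i)]
  calc ‖T x‖ = Real.sqrt (‖T x‖ ^ 2) := by rw [Real.sqrt_sq (norm_nonneg _)]
    _ ≤ Real.sqrt ((c * ‖x‖) ^ 2) := Real.sqrt_le_sqrt hx
    _ = c * ‖x‖ := Real.sqrt_sq (by positivity)

lemma aux_lamSet {n : ℕ} {A : Matrix (Fin n) (Fin n) ℝ} (hA : A.IsHermitian) :
    lamSet A = Set.range hA.eigenvalues := by
  ext μ
  constructor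
  · rintro ⟨v, hv, hmul⟩
    set x : E n := (WithLp.equiv 2 _).symm v with hxdef
    have hx : x ≠ 0 := by
      intro h
      apply hv
      ext j
      exact congrFun (congrArg (WithLp.equiv 2 _) h) j
    have hTx : Matrix.toEuclideanCLM (𝕜 := ℝ) A x = μ • x := by
      apply (WithLp.equiv 2 _).injective
      simp only [WithLp.equiv_apply, Matrix.ofLp_toEuclideanCLM, Matrix.toLin'_apply]
      ext j
      simpa [hxdef] using congrFun hmul j
    set b := hA.eigenvectorBasis with hb
    have hrx : b.repr x ≠ 0 := by
      intro h
      exact hx (by simpa using b.repr.map_eq_zero_iff.mp h)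
    obtain ⟨i, hi⟩ : ∃ i, b.repr x i ≠ 0 := by
      by_contra h
      push_neg at h
      exact hrx (by ext i; exact h i)
    have : hA.eigenvalues i * b.repr x i = μ * b.repr x i := by
      rw [← aux_repr hA, hTx, map_smul]
      simp [hb]
    exact ⟨i, mul_right_cancel₀ hi this⟩
  · rintro ⟨i, rfl⟩
    refine ⟨⇑(hA.eigenvectorBasis i), ?_, hA.mulVec_eigenvectorBasis i⟩
    intro h
    apply hA.eigenvectorBasis.orthonormal.ne_zero i
    ext j
    exact congrFun h j

set_option maxHeartbeats 1000000 in
set_option synthInstance.maxHeartbeats 1000000 in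
lemma aux_opNorm_sub_le {n : ℕ} (A B : Matrix (Fin n) (Fin n) ℝ) :
    opNorm (A - B) ≤ opNorm A + opNorm B := by
  unfold opNorm
  rw [map_sub]
  exact norm_sub_le _ _

set_option maxHeartbeats 1000000 in
set_option synthInstance.maxHeartbeats 1000000 in
lemma aux_opNorm_smul {n : ℕ} (c : ℝ) (A : Matrix (Fin n) (Fin n) ℝ) :
    opNorm (c • A) ≤ |c| * opNorm A := by
  unfold opNorm
  rw [map_smul]
  calc ‖c • Matrix.toEuclideanCLM (𝕜 := ℝ) A‖
      ≤ ‖c‖ * ‖Matrix.toEuclideanCLM (𝕜 := ℝ) A‖ :=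
        ContinuousLinearMap.opNorm_smul_le _ _
    _ = |c| * ‖Matrix.toEuclideanCLM (𝕜 := ℝ) A‖ := by rw [Real.norm_eq_abs]

set_option maxHeartbeats 1000000 in
set_option synthInstance.maxHeartbeats 1000000 in
lemma aux_opNorm_mul_le {n : ℕ} (A B : Matrix (Fin n) (Fin n) ℝ) :
    opNorm (A * B) ≤ opNorm A * opNorm B := by
  unfold opNorm
  rw [map_mul]
  exact norm_mul_le _ _

set_option maxHeartbeats 1000000 in
set_option synthInstance.maxHeartbeats 1000000 in
lemma aux_le_opNorm {n : ℕ} (A : Matrix (Fin n) (Fin n) ℝ) (x : E n) :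
    ‖Matrix.toEuclideanCLM (𝕜 := ℝ) A x‖ ≤ opNorm A * ‖x‖ :=
  ContinuousLinearMap.le_opNorm _ _

set_option maxHeartbeats 1000000 in
set_option synthInstance.maxHeartbeats 1000000 in
/-- Robust stability under relative deterministic noise: sufficiency. -/
theorem stmt_14 {n : ℕ} (hn : 0 < n) (Q : Matrix (Fin n) (Fin n) ℝ)
    (hQ : Q.PosDef) (ε : ℝ) (hε : 0 < ε)
    (Δ : ℕ → Matrix (Fin n) (Fin n) ℝ)
    (hΔ : ∀ k, opNorm (Δ k) < 1 / condNum Q - ε)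
    (e : ℕ → E n)
    (he : ∀ k, e (k + 1) =
      Matrix.toEuclideanCLM (𝕜 := ℝ)
        ((1 : Matrix (Fin n) (Fin n) ℝ) -
          (2 / (lamMin Q + lamMax Q)) • ((1 + Δ k) * Q)) (e k)) :
    (let κ := condNum Q
     let ρ := 1 - ε * κ / (κ + 1)
     0 < ρ ∧ ρ < 1 ∧ (∀ k, ‖e k‖ ≤ ρ ^ k * ‖e 0‖) ∧
       Filter.Tendsto e Filter.atTop (nhds 0)) := by
  have hH : Q.IsHermitian := hQ.isHermitian
  haveI : Nonempty (Fin n) := ⟨⟨0, hn⟩⟩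
  have hls : lamSet Q = Set.range hH.eigenvalues := aux_lamSet hH
  have hfin : (lamSet Q).Finite := by rw [hls]; exact Set.finite_range _
  have hne : (lamSet Q).Nonempty := by rw [hls]; exact Set.range_nonempty _
  set m := lamMin Q with hmdef
  set M := lamMax Q with hMdef
  have hMmem : M ∈ lamSet Q := Set.Nonempty.csSup_mem hne hfin
  have hmmem : m ∈ lamSet Q := Set.Nonempty.csInf_mem hne hfin
  have hub : ∀ μ ∈ lamSet Q, μ ≤ M := fun μ hμ => le_csSup hfin.bddAbove hμ
  have hlb : ∀ μ ∈ lamSet Q, m ≤ μ := fun μ hμ => csInf_le hfin.bddBelow hμ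
  have hpos : ∀ μ ∈ lamSet Q, 0 < μ := by
    intro μ hμ
    rw [hls] at hμ
    obtain ⟨i, rfl⟩ := hμ
    exact hQ.eigenvalues_pos i
  have hm0 : 0 < m := hpos m hmmem
  have hmM : m ≤ M := hlb M hMmem
  have hM0 : 0 < M := hm0.trans_le hmM
  have hmM0 : 0 < m + M := by linarith
  set α : ℝ := 2 / (m + M) with hαdef
  have hα0 : 0 < α := by positivity
  -- condNum
  have hκ : condNum Q = M / m := by rw [condNum, ← hmdef, ← hMdef]
  -- ε < m / M
  have hεlt : ε < m / M := by
    have h0 := hΔ 0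
    have hd0 : (0 : ℝ) ≤ opNorm (Δ 0) := norm_nonneg _
    rw [hκ, one_div, inv_div] at h0
    linarith
  have hεM : ε * M < m := by
    have := mul_lt_mul_of_pos_right hεlt hM0
    rwa [div_mul_cancel₀ m (ne_of_gt hM0)] at this
  have hMm0 : (0 : ℝ) < M + m := by linarith
  -- ρ in explicit form
  have hρeq : 1 - ε * condNum Q / (condNum Q + 1) = 1 - ε * M / (M + m) := by
    rw [hκ]
    congr 1
    rw [← mul_div_assoc, div_add_one (ne_of_gt hm0), div_div_eq_mul_div,
      div_mul_cancel₀ _ (ne_of_gt hm0)]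
  -- bound on eigenvalues of I - αQ
  have hBherm : ((1 : Matrix (Fin n) (Fin n) ℝ) - α • Q).IsHermitian := by
    apply Matrix.IsHermitian.sub Matrix.isHermitian_one
    unfold Matrix.IsHermitian
    rw [Matrix.conjTranspose_smul, star_trivial, hH]
  have hBev : ∀ i, |hBherm.eigenvalues i| ≤ (M - m) / (M + m) := by
    intro i
    set ν := hBherm.eigenvalues i with hν
    have hmul := hBherm.mulVec_eigenvectorBasis i
    set w : Fin n → ℝ := ⇑(hBherm.eigenvectorBasis i) with hw
    have hwne : w ≠ 0 := by
      intro h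
      apply hBherm.eigenvectorBasis.orthonormal.ne_zero i
      ext j
      exact congrFun h j
    have hQw : Q.mulVec w = ((1 - ν) / α) • w := by
      have h1 : ((1 : Matrix (Fin n) (Fin n) ℝ) - α • Q).mulVec w
          = w - α • Q.mulVec w := by
        rw [Matrix.sub_mulVec, Matrix.one_mulVec, Matrix.smul_mulVec]
      rw [h1] at hmul
      have h2 : α • Q.mulVec w = (1 - ν) • w := by
        rw [sub_smul, one_smul, ← hmul]; abel
      have h3 := congrArg (fun z => α⁻¹ • z) h2
      simpa [smul_smul, inv_mul_cancel₀ (ne_of_gt hα0), div_eq_inv_mul, mul_comm] using h3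
    have hmem : (1 - ν) / α ∈ lamSet Q := ⟨w, hwne, hQw⟩
    have h4 := hub _ hmem
    have h5 := hlb _ hmem
    rw [div_le_iff₀ hα0] at h4
    rw [le_div_iff₀ hα0] at h5
    have hα2 : α * (m + M) = 2 := by
      rw [hαdef]; field_simp
    have h4' : (1 - ν) * (m + M) ≤ 2 * M := by
      calc (1 - ν) * (m + M) ≤ M * α * (m + M) := mul_le_mul_of_nonneg_right h4 hmM0.le
        _ = M * (α * (m + M)) := by ring
        _ = 2 * M := by rw [hα2]; ring
    have h5' : 2 * m ≤ (1 - ν) * (m + M) := by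
      calc (2 : ℝ) * m = m * (α * (m + M)) := by rw [hα2]; ring
        _ = m * α * (m + M) := by ring
        _ ≤ (1 - ν) * (m + M) := mul_le_mul_of_nonneg_right h5 hmM0.le
    rw [abs_le]
    constructor
    · rw [← neg_div, neg_sub, div_le_iff₀ hMm0]
      nlinarith [h4']
    · rw [le_div_iff₀ hMm0]
      nlinarith [h5']
  have hBn : opNorm ((1 : Matrix (Fin n) (Fin n) ℝ) - α • Q) ≤ (M - m) / (M + m) :=
    aux_norm_le hBherm (div_nonneg (by linarith) hMm0.le) hBev
  have hQn : opNorm Q ≤ M := by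
    apply aux_norm_le hH hM0.le
    intro i
    rw [abs_of_pos (hQ.eigenvalues_pos i)]
    exact hub _ (hls ▸ Set.mem_range_self i)
  set ρ' : ℝ := 1 - ε * M / (M + m) with hρ'def
  have hρ'0 : 0 < ρ' := by
    rw [hρ'def, sub_pos, div_lt_one hMm0]
    linarith
  have hρ'1 : ρ' < 1 := by
    rw [hρ'def]
    have : 0 < ε * M / (M + m) := by positivity
    linarith
  -- per-step contraction
  have hTk : ∀ k, opNorm ((1 : Matrix (Fin n) (Fin n) ℝ) - α • ((1 + Δ k) * Q)) ≤ ρ' := by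
    intro k
    have hdk0 : (0 : ℝ) ≤ opNorm (Δ k) := norm_nonneg _
    have hdk : opNorm (Δ k) < m / M - ε := by
      have := hΔ k
      rwa [hκ, one_div, inv_div] at this
    have hdkM : opNorm (Δ k) * M < m - ε * M := by
      have := mul_lt_mul_of_pos_right hdk hM0
      rwa [sub_mul, div_mul_cancel₀ m (ne_of_gt hM0)] at this
    have hsplit : (1 : Matrix (Fin n) (Fin n) ℝ) - α • ((1 + Δ k) * Q)
        = ((1 : Matrix (Fin n) (Fin n) ℝ) - α • Q) - α • (Δ k * Q) := by
      rw [add_mul, one_mul, smul_add]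
      abel
    have step1 : opNorm ((1 : Matrix (Fin n) (Fin n) ℝ) - α • ((1 + Δ k) * Q))
        ≤ opNorm ((1 : Matrix (Fin n) (Fin n) ℝ) - α • Q) + α * (opNorm (Δ k) * opNorm Q) := by
      rw [hsplit]
      refine le_trans (aux_opNorm_sub_le _ _) (add_le_add_right ?_ _)
      refine le_trans (aux_opNorm_smul _ _) ?_
      rw [abs_of_pos hα0]
      exact mul_le_mul_of_nonneg_left (aux_opNorm_mul_le _ _) hα0.le
    have step2 : α * (opNorm (Δ k) * opNorm Q) ≤ α * (opNorm (Δ k) * M) := by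
      apply mul_le_mul_of_nonneg_left (mul_le_mul_of_nonneg_left hQn hdk0) hα0.le
    have step3 : (M - m) / (M + m) + α * (opNorm (Δ k) * M) ≤ ρ' := by
      rw [hρ'def, hαdef]
      have e1 : (M - m) / (M + m) + 2 / (m + M) * (opNorm (Δ k) * M)
          = (M - m + 2 * (opNorm (Δ k) * M)) / (M + m) := by
        field_simp
        ring
      have e2 : 1 - ε * M / (M + m) = (M + m - ε * M) / (M + m) := by
        field_simp
      rw [e1, e2, div_le_div_iff₀ hMm0 hMm0]
      nlinarith [mul_lt_mul_of_pos_right hdkM hMm0, mul_nonneg (mul_nonneg hε.le hM0.le) (le_of_lt hMm0)]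
    exact le_trans step1 (le_trans (add_le_add hBn step2) step3)
  -- the statement
  dsimp only
  rw [hρeq]
  rw [hρ'def] at hρ'0 hρ'1 hTk
  have hbound : ∀ k, ‖e k‖ ≤ (1 - ε * M / (M + m)) ^ k * ‖e 0‖ := by
    intro k
    induction k with
    | zero => simp
    | succ k ih =>
      rw [he k]
      have h1 : ‖Matrix.toEuclideanCLM (𝕜 := ℝ)
          ((1 : Matrix (Fin n) (Fin n) ℝ) - α • ((1 + Δ k) * Q)) (e k)‖
          ≤ opNorm ((1 : Matrix (Fin n) (Fin n) ℝ) - α • ((1 + Δ k) * Q)) * ‖e k‖ :=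
        aux_le_opNorm _ _
      calc ‖Matrix.toEuclideanCLM (𝕜 := ℝ)
            ((1 : Matrix (Fin n) (Fin n) ℝ) - α • ((1 + Δ k) * Q)) (e k)‖
          ≤ opNorm ((1 : Matrix (Fin n) (Fin n) ℝ) - α • ((1 + Δ k) * Q)) * ‖e k‖ := h1
        _ ≤ (1 - ε * M / (M + m)) * ((1 - ε * M / (M + m)) ^ k * ‖e 0‖) :=
            mul_le_mul (hTk k) ih (norm_nonneg _) hρ'0.le
        _ = (1 - ε * M / (M + m)) ^ (k + 1) * ‖e 0‖ := by ring
  refine ⟨hρ'0, hρ'1, hbound, ?_⟩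
  rw [tendsto_zero_iff_norm_tendsto_zero]
  apply squeeze_zero (fun k => norm_nonneg _) hbound
  have := (tendsto_pow_atTop_nhds_zero_of_lt_one hρ'0.le hρ'1).mul_const ‖e 0‖
  simpa using this

end
end

section
/- Let Q be an n×n real symmetric positive definite matrix with condition number κ = λ_max(Q)/λ_min(Q), and set α = 2/(λ_min(Q) + λ_max(Q)). Then there exists a symmetric matrix Δ ∈ ℝ^{n×n} with ‖Δ‖₂ = 1/κ such that the matrix M = I − α(I + Δ)Q has −1 as an eigenvalue; consequently there exists e(0) ≠ 0 such that the iteration e(k+1) = M·e(k) satisfies e(k) = (−1)ᵏ·e(0) for all k ≥ 0, so e(k) does not converge to 0. -/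
open Filter Matrix

noncomputable section

lemma lamSet_subset_range {n : ℕ} (Q : Matrix (Fin n) (Fin n) ℝ) (hH : Q.IsHermitian) :
    lamSet Q ⊆ Set.range hH.eigenvalues := by
  rintro μ ⟨v, hv, hQv⟩
  by_contra hμ
  have hU : (hH.eigenvectorUnitary : Matrix (Fin n) (Fin n) ℝ) *
      (star (hH.eigenvectorUnitary : Matrix (Fin n) (Fin n) ℝ)) = 1 :=
    Matrix.mem_unitaryGroup_iff.mp hH.eigenvectorUnitary.2
  have key : Q - μ • 1 = (hH.eigenvectorUnitary : Matrix (Fin n) (Fin n) ℝ) *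
      (Matrix.diagonal (RCLike.ofReal ∘ hH.eigenvalues) - μ • 1) *
      (star (hH.eigenvectorUnitary : Matrix (Fin n) (Fin n) ℝ)) := by
    rw [Matrix.mul_sub, Matrix.sub_mul]
    conv_lhs => rw [hH.spectral_theorem, Unitary.conjStarAlgAut_apply]
    congr 1
    rw [Matrix.mul_smul, mul_one, Matrix.smul_mul, hU]
  have hdet : (Q - μ • 1).det ≠ 0 := by
    have hU' : (star (hH.eigenvectorUnitary : Matrix (Fin n) (Fin n) ℝ)) *
        (hH.eigenvectorUnitary : Matrix (Fin n) (Fin n) ℝ) = 1 :=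
      Matrix.mem_unitaryGroup_iff'.mp hH.eigenvectorUnitary.2
    rw [key, Matrix.det_mul, Matrix.det_mul, mul_comm, ← mul_assoc, ← Matrix.det_mul, hU',
      Matrix.det_one, one_mul]
    have : Matrix.diagonal (RCLike.ofReal ∘ hH.eigenvalues) - μ • (1 : Matrix (Fin n) (Fin n) ℝ)
        = Matrix.diagonal (fun i => hH.eigenvalues i - μ) := by
      rw [Matrix.smul_one_eq_diagonal, ← Matrix.diagonal_sub]
      rfl
    rw [this, Matrix.det_diagonal]
    refine Finset.prod_ne_zero_iff.mpr fun i _ => sub_ne_zero.mpr fun h => hμ ⟨i, h⟩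
  have hunit : IsUnit (Q - μ • 1) := (Matrix.isUnit_iff_isUnit_det _).mpr (Ne.isUnit hdet)
  have hker : (Q - μ • 1).mulVec v = 0 := by
    rw [Matrix.sub_mulVec, hQv, Matrix.smul_mulVec, Matrix.one_mulVec, sub_self]
  exact hv (Matrix.mulVec_injective_iff_isUnit.mpr hunit (by simpa using hker))

lemma lamSet_finite {n : ℕ} (Q : Matrix (Fin n) (Fin n) ℝ) (hH : Q.IsHermitian) :
    (lamSet Q).Finite :=
  (Set.finite_range hH.eigenvalues).subset (lamSet_subset_range Q hH)

lemma eigen_mem_lamSet {n : ℕ} (Q : Matrix (Fin n) (Fin n) ℝ) (hH : Q.IsHermitian) (i : Fin n) :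
    hH.eigenvalues i ∈ lamSet Q :=
  ⟨hH.eigenvectorBasis i, by simpa using hH.eigenvectorBasis.orthonormal.ne_zero i,
    hH.mulVec_eigenvectorBasis i⟩

lemma lamSet_pos {n : ℕ} (Q : Matrix (Fin n) (Fin n) ℝ) (hQ : Q.PosDef) {μ : ℝ}
    (hμ : μ ∈ lamSet Q) : 0 < μ := by
  obtain ⟨v, hv, hQv⟩ := hμ
  have h1 : 0 < dotProduct v (Q.mulVec v) := by simpa using hQ.dotProduct_mulVec_pos hv
  rw [hQv, dotProduct_smul] at h1
  have hnn : 0 ≤ dotProduct v v :=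
    Finset.sum_nonneg fun i _ => mul_self_nonneg _
  have h2 : 0 < dotProduct v v := by
    rcases lt_or_eq_of_le hnn with h | h
    · exact h
    · exact absurd (dotProduct_self_eq_zero.mp h.symm) hv
  rw [smul_eq_mul] at h1
  nlinarith [h1, h2]

set_option synthInstance.maxHeartbeats 1000000 in
/-- Robust stability under relative deterministic noise: a destabilizing
perturbation of norm `1/κ`. -/
theorem stmt_15 {n : ℕ} (hn : 0 < n) (Q : Matrix (Fin n) (Fin n) ℝ)
    (hQ : Q.PosDef) :
    (let κ := condNum Q
     let α := 2 / (lamMin Q + lamMax Q)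
     ∃ Δ : Matrix (Fin n) (Fin n) ℝ, Δ.IsSymm ∧ opNorm Δ = 1 / κ ∧
       ∃ e₀ : E n, e₀ ≠ 0 ∧
         Matrix.toEuclideanCLM (𝕜 := ℝ)
           ((1 : Matrix (Fin n) (Fin n) ℝ) - α • ((1 + Δ) * Q)) e₀ = -e₀ ∧
         ∀ e : ℕ → E n, e 0 = e₀ →
           (∀ k, e (k + 1) =
             Matrix.toEuclideanCLM (𝕜 := ℝ)
               ((1 : Matrix (Fin n) (Fin n) ℝ) - α • ((1 + Δ) * Q)) (e k)) →
           (∀ k, e k = ((-1 : ℝ) ^ k) • e₀) ∧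
           ¬ Filter.Tendsto e Filter.atTop (nhds 0)) := by
  have hH : Q.IsHermitian := hQ.1
  intro kappa alpha
  have hfin : (lamSet Q).Finite := lamSet_finite Q hH
  have hne : (lamSet Q).Nonempty := ⟨_, eigen_mem_lamSet Q hH ⟨0, hn⟩⟩
  have hmax : lamMax Q ∈ lamSet Q := hne.csSup_mem hfin
  have hmin : lamMin Q ∈ lamSet Q := hne.csInf_mem hfin
  have hMpos : 0 < lamMax Q := lamSet_pos Q hQ hmax
  have hmpos : 0 < lamMin Q := lamSet_pos Q hQ hmin
  set c : ℝ := lamMin Q / lamMax Q with hc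
  have hcpos : 0 < c := div_pos hmpos hMpos
  obtain ⟨v, hv, hQv⟩ := hmax
  haveI : Nonempty (Fin n) := ⟨⟨0, hn⟩⟩
  set e₀ : E n := (WithLp.equiv 2 (Fin n → ℝ)).symm v with he₀def
  have he₀ne : e₀ ≠ 0 := by
    intro h
    apply hv
    have := congrArg (WithLp.equiv 2 (Fin n → ℝ)) h
    simpa [he₀def] using this
  have hα : alpha = 2 / (lamMin Q + lamMax Q) := rfl
  have hs : alpha * (1 + c) * lamMax Q = 2 := by
    rw [hα, hc]
    field_simp
    ring
  have hMmat : (1 : Matrix (Fin n) (Fin n) ℝ) - alpha • ((1 + c • 1) * Q)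
      = 1 - (alpha * (1 + c)) • Q := by
    have h1 : (1 : Matrix (Fin n) (Fin n) ℝ) + c • 1 = (1 + c) • 1 := by
      rw [add_smul, one_smul]
    rw [h1, Matrix.smul_mul, one_mul, smul_smul]
  have hTe0 : Matrix.toEuclideanCLM (𝕜 := ℝ)
      ((1 : Matrix (Fin n) (Fin n) ℝ) - alpha • ((1 + c • 1) * Q)) e₀ = -e₀ := by
    rw [hMmat, he₀def, WithLp.equiv_symm_apply, Matrix.toEuclideanCLM_toLp]
    have hmv : ((1 : Matrix (Fin n) (Fin n) ℝ) - (alpha * (1 + c)) • Q) *ᵥ v = -v := by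
      rw [Matrix.sub_mulVec, Matrix.one_mulVec, Matrix.smul_mulVec, hQv,
        smul_smul, hs]
      funext i
      simp only [Pi.sub_apply, Pi.smul_apply, smul_eq_mul, Pi.neg_apply]
      ring
    rw [hmv]
    rfl
  refine ⟨c • 1, ?_, ?_, e₀, he₀ne, hTe0, ?_⟩
  · show (c • (1 : Matrix (Fin n) (Fin n) ℝ))ᵀ = c • 1
    rw [Matrix.transpose_smul, Matrix.transpose_one]
  · show ‖Matrix.toEuclideanCLM (𝕜 := ℝ) (n := Fin n) (c • 1)‖ = 1 / kappa
    have hκ : kappa = lamMax Q / lamMin Q := rfl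
    rw [_root_.map_smul, _root_.map_one, norm_smul c (1 : E n →L[ℝ] E n), norm_one, hκ, one_div_div]
    simp [hc, abs_div, abs_of_pos hmpos, abs_of_pos hMpos]
  · intro e he0 hrec
    have hek : ∀ k, e k = ((-1 : ℝ) ^ k) • e₀ := by
      intro k
      induction k with
      | zero => simpa using he0
      | succ k ih =>
        rw [hrec k, ih, _root_.map_smul, hTe0, pow_succ]
        simp [mul_smul]
    refine ⟨hek, ?_⟩
    intro hT
    have h1 : Filter.Tendsto (fun k => ‖e k‖) Filter.atTop (nhds 0) := by
      simpa using hT.norm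
    have h2 : (fun k => ‖e k‖) = fun _ => ‖e₀‖ := by
      funext k
      rw [hek k, norm_smul]
      simp
    rw [h2] at h1
    exact he₀ne (norm_eq_zero.mp (tendsto_nhds_unique tendsto_const_nhds h1))


end
end
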